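/- arXiv:0707.0257 — 5 statements merged into one kernel-verified Lean document; each statement's English description precedes it below -/
import Mathlib

section
/- Let (Ω, 𝒜, P) be a probability space, and for each n ∈ ℕ let L_n ∈ ℕ, let 𝓕^n_0 ⊆ 𝓕^n_1 ⊆ … ⊆ 𝓕^n_{L_n+1} ⊆ 𝒜 be sigma-algebras, and let (χ^n_l)_{0≤l≤L_n} be square-integrable real random variables such that χ^n_l is 𝓕^n_{l+1}-measurable. Let U be a real random variable. If ∑_{l=0}^{L_n} E[χ^n_l | 𝓕^n_l] converges to U in probability and ∑_{l=0}^{L_n} E[(χ^n_l)² | 𝓕^n_l] converges to 0 in probability as n → ∞, then ∑_{l=0}^{L_n} χ^n_l converges to U in probability. -/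
open MeasureTheory Filter

lemma memℒp_two_condexp' {Ω : Type*} {m m0 : MeasurableSpace Ω} {P : Measure Ω}
    [IsFiniteMeasure P] (hm : m ≤ m0) {f : Ω → ℝ}
    (hf : MemLp f 2 P) : MemLp (P[f|m]) 2 P := by
  have hsf : SigmaFinite (P.trim hm) := inferInstance
  set gL := condExpL2 ℝ ℝ hm (hf.toLp f) with hgL
  refine (MeasureTheory.Lp.memLp (gL : MeasureTheory.Lp ℝ 2 P)).ae_eq
    (ae_eq_condExp_of_forall_setIntegral_eq hm (hf.integrable one_le_two)
      (fun s hs hμs =>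
        integrableOn_Lp_of_measure_ne_top (gL : MeasureTheory.Lp ℝ 2 P)
          fact_one_le_two_ennreal.elim hμs.ne)
      (fun s hs hμs => ?_) (lpMeas.aestronglyMeasurable gL))
  rw [hgL, integral_condExpL2_eq (𝕜 := ℝ) hm (hf.toLp f) hs hμs.ne]
  exact setIntegral_congr_ae (hm s hs) ((hf.coeFn_toLp).mono fun x hx _ => hx)


lemma integrable_mul₂' {Ω : Type*} {m0 : MeasurableSpace Ω} {P : Measure Ω}
    {f g : Ω → ℝ} (hf : MemLp f 2 P) (hg : MemLp g 2 P) :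
    Integrable (fun ω => f ω * g ω) P := by
  refine ((hf.integrable_sq.add hg.integrable_sq).div_const 2).mono'
    (hf.aestronglyMeasurable.mul hg.aestronglyMeasurable) ?_
  filter_upwards with ω
  simp only [Pi.add_apply, Real.norm_eq_abs, abs_mul]
  nlinarith [sq_abs (f ω), sq_abs (g ω), sq_nonneg (|f ω| - |g ω|), abs_nonneg (f ω),
    abs_nonneg (g ω)]

lemma integral_sq_sum_martingale_diff' {Ω : Type*} [m0 : MeasurableSpace Ω] (P : Measure Ω)
    [IsProbabilityMeasure P] (F : ℕ → MeasurableSpace Ω) (hmono : ∀ l, F l ≤ F (l + 1))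
    (e : ℕ → Ω → ℝ) :
    ∀ N : ℕ, (∀ l, l < N → F l ≤ m0) → (∀ l, l < N → MemLp (e l) 2 P) →
      (∀ l, l < N → StronglyMeasurable[F (l + 1)] (e l)) →
      (∀ l, l < N → P[e l|F l] =ᵐ[P] 0) →
      ∫ ω, (∑ l ∈ Finset.range N, e l ω) ^ 2 ∂P
        = ∑ l ∈ Finset.range N, ∫ ω, (e l ω) ^ 2 ∂P := by
  intro N
  induction N with
  | zero => simp
  | succ N ih =>
    intro hle h2 hsm hz
    have hmono' : Monotone F := monotone_nat_of_le_succ hmono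
    have hWsm : StronglyMeasurable[F N] (fun ω => ∑ l ∈ Finset.range N, e l ω) :=
      Finset.stronglyMeasurable_fun_sum _ fun l hl =>
        (hsm l ((Finset.mem_range.mp hl).trans (Nat.lt_succ_self N))).mono
          (hmono' (Nat.succ_le_of_lt (Finset.mem_range.mp hl)))
    have hW2 : MemLp (fun ω => ∑ l ∈ Finset.range N, e l ω) 2 P :=
      memLp_finset_sum _ fun l hl =>
        h2 l ((Finset.mem_range.mp hl).trans (Nat.lt_succ_self N))
    have heN2 : MemLp (e N) 2 P := h2 N (Nat.lt_succ_self N)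
    have hmul : Integrable ((fun ω => ∑ l ∈ Finset.range N, e l ω) * e N) P := by
      exact integrable_mul₂' hW2 heN2
    have hzero : ∫ ω, (∑ l ∈ Finset.range N, e l ω) * e N ω ∂P = 0 := by
      have hpull := condExp_mul_of_stronglyMeasurable_left (μ := P) (m := F N) hWsm hmul
        (heN2.integrable one_le_two)
      have hsf : SigmaFinite (P.trim (hle N (Nat.lt_succ_self N))) := inferInstance
      calc ∫ ω, (∑ l ∈ Finset.range N, e l ω) * e N ω ∂P
          = ∫ ω, (P[(fun ω => ∑ l ∈ Finset.range N, e l ω) * e N|F N]) ω ∂P :=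
            (integral_condExp (hle N (Nat.lt_succ_self N))).symm
        _ = ∫ ω, ((fun ω => ∑ l ∈ Finset.range N, e l ω) * P[e N|F N]) ω ∂P :=
            integral_congr_ae hpull
        _ = 0 := by
            rw [← integral_zero Ω ℝ (μ := P)]
            refine integral_congr_ae ?_
            filter_upwards [hz N (Nat.lt_succ_self N)] with ω hω
            simp only [Pi.mul_apply, Pi.zero_apply] at hω ⊢
            rw [hω, mul_zero]
    have hint1 : Integrable
        (fun ω => 2 * ((∑ l ∈ Finset.range N, e l ω) * e N ω) + (e N ω) ^ 2) P := by
      exact (hmul.const_mul 2).add heN2.integrable_sq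
    calc ∫ ω, (∑ l ∈ Finset.range (N + 1), e l ω) ^ 2 ∂P
        = ∫ ω, ((∑ l ∈ Finset.range N, e l ω) ^ 2
            + (2 * ((∑ l ∈ Finset.range N, e l ω) * e N ω) + (e N ω) ^ 2)) ∂P := by
          refine integral_congr_ae (Eventually.of_forall fun ω => ?_)
          simp only [Finset.sum_range_succ]; ring
      _ = (∫ ω, (∑ l ∈ Finset.range N, e l ω) ^ 2 ∂P)
            + ((∫ ω, 2 * ((∑ l ∈ Finset.range N, e l ω) * e N ω) ∂P)
              + ∫ ω, (e N ω) ^ 2 ∂P) := by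
          have h2' : Integrable
              (fun ω => 2 * ((∑ l ∈ Finset.range N, e l ω) * e N ω)) P := by
            exact hmul.const_mul 2
          rw [integral_add hW2.integrable_sq hint1,
            integral_add h2' heN2.integrable_sq]
      _ = ∑ l ∈ Finset.range (N + 1), ∫ ω, (e l ω) ^ 2 ∂P := by
          rw [integral_const_mul, hzero,
            ih (fun l hl => hle l (hl.trans (Nat.lt_succ_self N)))
              (fun l hl => h2 l (hl.trans (Nat.lt_succ_self N)))
              (fun l hl => hsm l (hl.trans (Nat.lt_succ_self N)))
              (fun l hl => hz l (hl.trans (Nat.lt_succ_self N))),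
            Finset.sum_range_succ]
          ring


lemma sum_ite_telescope' {a : ℕ → ℝ} {ε : ℝ} (hε : 0 ≤ ε) :
    ∀ M : ℕ, (∀ l, l < M → 0 ≤ a l) →
      (∑ l ∈ Finset.range M,
        if (∑ k ∈ Finset.range (l + 1), a k) ≤ ε then a l else 0) ≤ ε ∧
      (∑ l ∈ Finset.range M,
        if (∑ k ∈ Finset.range (l + 1), a k) ≤ ε then a l else 0)
        ≤ ∑ l ∈ Finset.range M, a l := by
  intro M
  induction M with
  | zero => simp [hε]
  | succ M ih =>
    intro ha
    obtain ⟨h1, h2⟩ := ih fun l hl => ha l (hl.trans (Nat.lt_succ_self M))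
    have haM : 0 ≤ a M := ha M (Nat.lt_succ_self M)
    rw [Finset.sum_range_succ, Finset.sum_range_succ (f := a)]
    by_cases hc : (∑ k ∈ Finset.range (M + 1), a k) ≤ ε <;>
      rw [Finset.sum_range_succ (f := a)] at hc
    · rw [if_pos hc]
      constructor <;> linarith
    · rw [if_neg hc]
      push_neg at hc
      constructor <;> linarith

lemma key_estimate' {Ω : Type*} [m0 : MeasurableSpace Ω] (P : Measure Ω) [IsProbabilityMeasure P]
    (F : ℕ → MeasurableSpace Ω) (hmono : ∀ l, F l ≤ F (l + 1)) (N : ℕ)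
    (hle : ∀ l, l ≤ N + 1 → F l ≤ m0) (χ : ℕ → Ω → ℝ)
    (hχ2 : ∀ l, l ≤ N → MemLp (χ l) 2 P)
    (hχm : ∀ l, l ≤ N → StronglyMeasurable[F (l + 1)] (χ l))
    {ε η : ℝ} (hε : 0 < ε) (hη : 0 < η) :
    P {ω | η ≤ |∑ l ∈ Finset.range (N + 1), (χ l ω - (P[χ l|F l]) ω)|}
      ≤ ENNReal.ofReal (ε / η ^ 2)
        + P {ω | ε ≤ |∑ l ∈ Finset.range (N + 1), (P[fun ω' => (χ l ω') ^ 2|F l]) ω|} := by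
  have hmono' : Monotone F := monotone_nat_of_le_succ hmono
  have hleN : ∀ l, l ≤ N → F l ≤ m0 := fun l hl => hle l (hl.trans (Nat.le_succ N))
  set c : ℕ → Ω → ℝ := fun l => P[χ l|F l] with hc
  set g : ℕ → Ω → ℝ := fun l => P[fun ω' => (χ l ω') ^ 2|F l] with hgdef
  set d : ℕ → Ω → ℝ := fun l ω => χ l ω - c l ω with hd
  set S : ℕ → Set Ω := fun l => {ω | ∑ k ∈ Finset.range (l + 1), g k ω ≤ ε} with hSdef
  set e : ℕ → Ω → ℝ := fun l => (S l).indicator (d l) with he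
  -- basic facts
  have hc2 : ∀ l, l ≤ N → MemLp (c l) 2 P := fun l hl =>
    memℒp_two_condexp' (hleN l hl) (hχ2 l hl)
  have hd2 : ∀ l, l ≤ N → MemLp (d l) 2 P := fun l hl => (hχ2 l hl).sub (hc2 l hl)
  have hdsm : ∀ l, l ≤ N → StronglyMeasurable[F (l + 1)] (d l) := fun l hl =>
    (hχm l hl).sub (stronglyMeasurable_condExp.mono (hmono l))
  have hgsm : ∀ l, StronglyMeasurable[F l] (g l) := fun l => stronglyMeasurable_condExp
  have hSF : ∀ l, MeasurableSet[F l] (S l) := by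
    intro l
    have hsum : StronglyMeasurable[F l] (fun ω => ∑ k ∈ Finset.range (l + 1), g k ω) :=
      Finset.stronglyMeasurable_fun_sum _ fun k hk =>
        (hgsm k).mono (hmono' (Nat.lt_succ_iff.mp (Finset.mem_range.mp hk)))
    exact hsum.measurable measurableSet_Iic
  have hSm0 : ∀ l, l ≤ N → MeasurableSet (S l) := fun l hl => hleN l hl _ (hSF l)
  have he2 : ∀ l, l ≤ N → MemLp (e l) 2 P := fun l hl => (hd2 l hl).indicator (hSm0 l hl)
  have hesm : ∀ l, l ≤ N → StronglyMeasurable[F (l + 1)] (e l) := fun l hl =>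
    (hdsm l hl).indicator (hmono l _ (hSF l))
  have hdz : ∀ l, l ≤ N → P[d l|F l] =ᵐ[P] 0 := by
    intro l hl
    have h1 : P[c l|F l] =ᵐ[P] c l := condExp_condExp_of_le le_rfl (hleN l hl)
    have h2 : P[χ l - c l|F l] =ᵐ[P] P[χ l|F l] - P[c l|F l] :=
      condExp_sub ((hχ2 l hl).integrable one_le_two) integrable_condExp (F l)
    have h3 : P[d l|F l] = P[χ l - c l|F l] := rfl
    rw [h3]
    filter_upwards [h1, h2] with ω hω1 hω2
    rw [hω2]
    simp only [Pi.sub_apply, Pi.zero_apply]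
    rw [hω1]
    simp [hc]
  have hez : ∀ l, l ≤ N → P[e l|F l] =ᵐ[P] 0 := by
    intro l hl
    have hind : e l = (S l).indicator (fun _ => (1 : ℝ)) * d l := by
      funext ω
      by_cases h : ω ∈ S l <;> simp [he, Set.indicator_apply, h]
    have husm : StronglyMeasurable[F l] ((S l).indicator (fun _ => (1 : ℝ))) :=
      stronglyMeasurable_const.indicator (hSF l)
    have hud : Integrable ((S l).indicator (fun _ => (1 : ℝ)) * d l) P := by
      rw [← hind]; exact (he2 l hl).integrable one_le_two
    have hpull := condExp_mul_of_stronglyMeasurable_left husm hud ((hd2 l hl).integrable one_le_two)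
    rw [hind]
    filter_upwards [hpull, hdz l hl] with ω hω1 hω2
    rw [hω1]
    simp only [Pi.mul_apply, Pi.zero_apply] at hω2 ⊢
    rw [hω2, mul_zero]
  -- orthogonality
  have horth : ∫ ω, (∑ l ∈ Finset.range (N + 1), e l ω) ^ 2 ∂P
      = ∑ l ∈ Finset.range (N + 1), ∫ ω, (e l ω) ^ 2 ∂P :=
    integral_sq_sum_martingale_diff' P F hmono e (N + 1)
      (fun l hl => hleN l (Nat.lt_succ_iff.mp hl))
      (fun l hl => he2 l (Nat.lt_succ_iff.mp hl))
      (fun l hl => hesm l (Nat.lt_succ_iff.mp hl))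
      (fun l hl => hez l (Nat.lt_succ_iff.mp hl))
  -- bound on each term
  have hbound : ∀ l, l ≤ N → ∫ ω, (e l ω) ^ 2 ∂P ≤ ∫ ω in S l, g l ω ∂P := by
    intro l hl
    have hind2 : (fun ω => (e l ω) ^ 2) = (S l).indicator (fun ω => (d l ω) ^ 2) := by
      funext ω
      by_cases h : ω ∈ S l <;> simp [he, Set.indicator_apply, h]
    have hi1 : ∫ ω, (e l ω) ^ 2 ∂P = ∫ ω in S l, (d l ω) ^ 2 ∂P := by
      rw [hind2, integral_indicator (hSm0 l hl)]
    have hintcχ : Integrable (fun ω => c l ω * χ l ω) P :=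
      integrable_mul₂' (hc2 l hl) (hχ2 l hl)
    have hintcχ' : Integrable (c l * χ l) P := by exact hintcχ
    have hpull : P[c l * χ l|F l] =ᵐ[P] c l * P[χ l|F l] :=
      condExp_mul_of_stronglyMeasurable_left stronglyMeasurable_condExp hintcχ'
        ((hχ2 l hl).integrable one_le_two)
    have hcχ : ∫ ω in S l, c l ω * χ l ω ∂P = ∫ ω in S l, (c l ω) ^ 2 ∂P := by
      calc ∫ ω in S l, c l ω * χ l ω ∂P
          = ∫ ω in S l, (P[c l * χ l|F l]) ω ∂P :=
            (setIntegral_condExp (hleN l hl) hintcχ' (hSF l)).symm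
        _ = ∫ ω in S l, (c l ω) ^ 2 ∂P := by
            refine setIntegral_congr_ae (hSm0 l hl) ?_
            filter_upwards [hpull] with ω hω _
            rw [hω]
            simp only [Pi.mul_apply, hc]
            ring
    have hint1 : IntegrableOn (fun ω => (χ l ω) ^ 2) (S l) P :=
      (hχ2 l hl).integrable_sq.integrableOn
    have hint2 : IntegrableOn (fun ω => c l ω * χ l ω) (S l) P := hintcχ.integrableOn
    have hint3 : IntegrableOn (fun ω => (c l ω) ^ 2) (S l) P :=
      (hc2 l hl).integrable_sq.integrableOn
    have hi2 : ∫ ω in S l, (d l ω) ^ 2 ∂P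
        = ∫ ω in S l, (χ l ω) ^ 2 ∂P - 2 * ∫ ω in S l, c l ω * χ l ω ∂P
          + ∫ ω in S l, (c l ω) ^ 2 ∂P := by
      have heq : ∀ ω, (d l ω) ^ 2
          = ((χ l ω) ^ 2 - 2 * (c l ω * χ l ω)) + (c l ω) ^ 2 := by
        intro ω; simp only [hd]; ring
      rw [integral_congr_ae (Eventually.of_forall fun ω => heq ω)]
      have ha : Integrable (fun ω => (χ l ω) ^ 2 - 2 * (c l ω * χ l ω)) (P.restrict (S l)) := by
        exact hint1.sub (hint2.const_mul 2)
      rw [integral_add ha hint3, integral_sub hint1 (hint2.const_mul 2), integral_const_mul]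
    have hcsq_nonneg : 0 ≤ ∫ ω in S l, (c l ω) ^ 2 ∂P :=
      setIntegral_nonneg (hSm0 l hl) fun ω _ => sq_nonneg _
    have hχg : ∫ ω in S l, (χ l ω) ^ 2 ∂P = ∫ ω in S l, g l ω ∂P :=
      (setIntegral_condExp (hleN l hl) (hχ2 l hl).integrable_sq (hSF l)).symm
    rw [hi1, hi2, hcχ, ← hχg] at *
    linarith
  -- the sum of the stopped conditional variances is at most ε
  have hgnn : ∀ᵐ ω ∂P, ∀ l, 0 ≤ g l ω := by
    rw [ae_all_iff]
    intro l
    have h := condExp_nonneg (μ := P) (m := F l) (f := fun ω' => (χ l ω') ^ 2)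
      (Eventually.of_forall fun ω => sq_nonneg _)
    filter_upwards [h] with ω hω
    simpa [hgdef] using hω
  have hindint : ∀ l ∈ Finset.range (N + 1), Integrable ((S l).indicator (g l)) P :=
    fun l hl => integrable_condExp.indicator (hSm0 l (Nat.lt_succ_iff.mp (Finset.mem_range.mp hl)))
  have hsum : ∑ l ∈ Finset.range (N + 1), ∫ ω in S l, g l ω ∂P ≤ ε := by
    calc ∑ l ∈ Finset.range (N + 1), ∫ ω in S l, g l ω ∂P
        = ∑ l ∈ Finset.range (N + 1), ∫ ω, (S l).indicator (g l) ω ∂P :=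
          Finset.sum_congr rfl fun l hl =>
            (integral_indicator (hSm0 l (Nat.lt_succ_iff.mp (Finset.mem_range.mp hl)))).symm
      _ = ∫ ω, ∑ l ∈ Finset.range (N + 1), (S l).indicator (g l) ω ∂P :=
          (integral_finset_sum _ hindint).symm
      _ ≤ ∫ _ω, ε ∂P := by
          refine integral_mono_ae (integrable_finset_sum _ hindint) (integrable_const ε) ?_
          filter_upwards [hgnn] with ω hω
          have hkey := (sum_ite_telescope' (a := fun k => g k ω) hε.le (N + 1)
            fun l _ => hω l).1
          refine le_trans (le_of_eq ?_) hkey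
          refine Finset.sum_congr rfl fun l hl => ?_
          split_ifs with hcond
          · exact Set.indicator_of_mem (show ω ∈ S l from hcond) (g l)
          · exact Set.indicator_of_notMem (show ω ∉ S l from hcond) (g l)
      _ = ε := by simp
  -- Chebyshev for the stopped sum
  have hZ2 : MemLp (fun ω => ∑ l ∈ Finset.range (N + 1), e l ω) 2 P :=
    memLp_finset_sum _ fun l hl => he2 l (Nat.lt_succ_iff.mp (Finset.mem_range.mp hl))
  have hεint : ∫ ω, (∑ l ∈ Finset.range (N + 1), e l ω) ^ 2 ∂P ≤ ε := by
    rw [horth]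
    exact le_trans (Finset.sum_le_sum fun l hl =>
      hbound l (Nat.lt_succ_iff.mp (Finset.mem_range.mp hl))) hsum
  have hZ : P {ω | η ≤ |∑ l ∈ Finset.range (N + 1), e l ω|} ≤ ENNReal.ofReal (ε / η ^ 2) := by
    have hch := mul_meas_ge_le_integral_of_nonneg (μ := P)
      (f := fun ω => (∑ l ∈ Finset.range (N + 1), e l ω) ^ 2)
      (Eventually.of_forall fun ω => sq_nonneg _) hZ2.integrable_sq (η ^ 2)
    have hset : {ω | η ≤ |∑ l ∈ Finset.range (N + 1), e l ω|}
        = {ω | η ^ 2 ≤ (∑ l ∈ Finset.range (N + 1), e l ω) ^ 2} := by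
      ext ω
      simp only [Set.mem_setOf_eq]
      constructor
      · intro h
        calc η ^ 2 ≤ |∑ l ∈ Finset.range (N + 1), e l ω| ^ 2 :=
              pow_le_pow_left₀ hη.le h 2
          _ = (∑ l ∈ Finset.range (N + 1), e l ω) ^ 2 := sq_abs _
      · intro h
        by_contra h'
        push_neg at h'
        nlinarith [abs_nonneg (∑ l ∈ Finset.range (N + 1), e l ω),
          sq_abs (∑ l ∈ Finset.range (N + 1), e l ω)]
    rw [hset]
    have hne : P {ω | η ^ 2 ≤ (∑ l ∈ Finset.range (N + 1), e l ω) ^ 2} ≠ ⊤ :=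
      measure_ne_top P _
    rw [← ENNReal.ofReal_toReal hne]
    refine ENNReal.ofReal_le_ofReal ?_
    rw [le_div_iff₀ (pow_pos hη 2)]
    calc (P {ω | η ^ 2 ≤ (∑ l ∈ Finset.range (N + 1), e l ω) ^ 2}).toReal * η ^ 2
        = η ^ 2 * (P {ω | η ^ 2 ≤ (∑ l ∈ Finset.range (N + 1), e l ω) ^ 2}).toReal := by ring
      _ ≤ ∫ ω, (∑ l ∈ Finset.range (N + 1), e l ω) ^ 2 ∂P := hch
      _ ≤ ε := hεint
  -- conclusion
  calc P {ω | η ≤ |∑ l ∈ Finset.range (N + 1), (χ l ω - (P[χ l|F l]) ω)|}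
      ≤ P ({ω | η ≤ |∑ l ∈ Finset.range (N + 1), e l ω|}
          ∪ {ω | ε ≤ |∑ l ∈ Finset.range (N + 1), (P[fun ω' => (χ l ω') ^ 2|F l]) ω|}) := by
        refine measure_mono_ae ?_
        filter_upwards [hgnn] with ω hω hY
        by_cases hB : ∑ l ∈ Finset.range (N + 1), g l ω ≤ ε
        · refine Or.inl ?_
          have hmem : ∀ l, l < N + 1 → ω ∈ S l := by
            intro l hl
            show ∑ k ∈ Finset.range (l + 1), g k ω ≤ ε
            refine le_trans (Finset.sum_le_sum_of_subset_of_nonneg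
              (Finset.range_subset_range.mpr hl) fun k _ _ => hω k) hB
          show η ≤ |∑ l ∈ Finset.range (N + 1), e l ω|
          have heq : ∑ l ∈ Finset.range (N + 1), e l ω
              = ∑ l ∈ Finset.range (N + 1), (χ l ω - (P[χ l|F l]) ω) := by
            refine Finset.sum_congr rfl fun l hl => ?_
            rw [he]
            simp only
            rw [Set.indicator_of_mem (hmem l (Finset.mem_range.mp hl))]
          rw [heq]
          exact hY
        · refine Or.inr ?_
          push_neg at hB
          show ε ≤ |∑ l ∈ Finset.range (N + 1), (P[fun ω' => (χ l ω') ^ 2|F l]) ω|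
          refine le_trans hB.le (le_trans ?_ (le_abs_self _))
          simp [hgdef]
    _ ≤ P {ω | η ≤ |∑ l ∈ Finset.range (N + 1), e l ω|}
          + P {ω | ε ≤ |∑ l ∈ Finset.range (N + 1), (P[fun ω' => (χ l ω') ^ 2|F l]) ω|} :=
        measure_union_le _ _
    _ ≤ ENNReal.ofReal (ε / η ^ 2)
          + P {ω | ε ≤ |∑ l ∈ Finset.range (N + 1), (P[fun ω' => (χ l ω') ^ 2|F l]) ω|} :=
        add_le_add_left hZ _

lemma tendstoInMeasure_add' {Ω : Type*} [m0 : MeasurableSpace Ω] {P : Measure Ω}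
    {f g : ℕ → Ω → ℝ} {a b : Ω → ℝ}
    (hf : TendstoInMeasure P f atTop a) (hg : TendstoInMeasure P g atTop b) :
    TendstoInMeasure P (fun n ω => f n ω + g n ω) atTop (fun ω => a ω + b ω) := by
  rw [tendstoInMeasure_iff_dist] at hf hg ⊢
  intro δ hδ
  have hb0 : Tendsto (fun n => P {x | δ / 2 ≤ dist (f n x) (a x)}
      + P {x | δ / 2 ≤ dist (g n x) (b x)}) atTop (nhds 0) := by
    simpa using (hf (δ / 2) (half_pos hδ)).add (hg (δ / 2) (half_pos hδ))
  refine tendsto_of_tendsto_of_tendsto_of_le_of_le tendsto_const_nhds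
    hb0 (fun n => zero_le) (fun n => ?_)
  · refine le_trans (measure_mono ?_) (measure_union_le _ _)
    intro ω hω
    simp only [Set.mem_setOf_eq] at hω
    rw [Set.mem_union]
    by_contra h
    push_neg at h
    simp only [Set.mem_setOf_eq, not_le] at h
    have htr := dist_add_add_le (f n ω) (g n ω) (a ω) (b ω)
    linarith [h.1, h.2]

/-- Genon-Catalot and Jacod, Lemma 9: for a triangular array `(χ^n_l)_{0 ≤ l ≤ L_n}`
of square-integrable random variables with `χ^n_l` measurable w.r.t. `𝓕^n_{l+1}`, if
`∑_{l=0}^{L_n} E[χ^n_l | 𝓕^n_l] → U` in probability and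
`∑_{l=0}^{L_n} E[(χ^n_l)² | 𝓕^n_l] → 0` in probability, then
`∑_{l=0}^{L_n} χ^n_l → U` in probability. -/
theorem tendstoInMeasure_sum_of_condexp_tendsto
    {Ω : Type*} [m0 : MeasurableSpace Ω] (P : Measure Ω) [IsProbabilityMeasure P]
    (L : ℕ → ℕ)
    (F : (n : ℕ) → ℕ → MeasurableSpace Ω)
    (hF_mono : ∀ n l, F n l ≤ F n (l + 1))
    (hF_le : ∀ n l, l ≤ L n + 1 → F n l ≤ m0)
    (χ : (n : ℕ) → ℕ → Ω → ℝ)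
    (hχ_L2 : ∀ n l, l ≤ L n → MemLp (χ n l) 2 P)
    (hχ_meas : ∀ n l, l ≤ L n → StronglyMeasurable[F n (l + 1)] (χ n l))
    (U : Ω → ℝ)
    (h1 : TendstoInMeasure P
      (fun n ω => ∑ l ∈ Finset.range (L n + 1), (P[χ n l | F n l]) ω) atTop U)
    (h2 : TendstoInMeasure P
      (fun n ω => ∑ l ∈ Finset.range (L n + 1), (P[fun ω' => (χ n l ω') ^ 2 | F n l]) ω) atTop
      (fun _ => 0)) :
    TendstoInMeasure P (fun n ω => ∑ l ∈ Finset.range (L n + 1), χ n l ω) atTop U := by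
  -- the centered sums tend to zero in measure
  have hD : TendstoInMeasure P
      (fun n ω => ∑ l ∈ Finset.range (L n + 1), (χ n l ω - (P[χ n l|F n l]) ω)) atTop
      (fun _ => 0) := by
    rw [tendstoInMeasure_iff_dist] at h2 ⊢
    intro η hη
    rw [ENNReal.tendsto_atTop_zero]
    intro δ hδ
    set δ' := min δ 1 with hδ'def
    have hδ'pos : 0 < δ' := lt_min hδ zero_lt_one
    have hδ'ne : δ' ≠ ⊤ := ne_top_of_le_ne_top ENNReal.one_ne_top (min_le_right δ 1)
    have hδ'2pos : (0 : ENNReal) < δ' / 2 := ENNReal.div_pos hδ'pos.ne' ENNReal.ofNat_ne_top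
    have hδ'2ne : δ' / 2 ≠ ⊤ := by
      exact ne_top_of_le_ne_top hδ'ne (ENNReal.half_le_self)
    set ε := (δ' / 2).toReal * η ^ 2 with hεdef
    have hεpos : 0 < ε :=
      mul_pos (ENNReal.toReal_pos hδ'2pos.ne' hδ'2ne) (pow_pos hη 2)
    have hofReal : ENNReal.ofReal (ε / η ^ 2) = δ' / 2 := by
      rw [hεdef, mul_div_assoc, div_self (by positivity), mul_one,
        ENNReal.ofReal_toReal hδ'2ne]
    have hh2 := (h2 ε hεpos).eventually_lt_const hδ'2pos
    rw [eventually_atTop] at hh2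
    obtain ⟨M, hM⟩ := hh2
    refine ⟨M, fun n hn => ?_⟩
    have hkey := key_estimate' P (F n) (hF_mono n) (L n) (hF_le n) (χ n)
      (fun l hl => hχ_L2 n l hl) (fun l hl => hχ_meas n l hl) hεpos hη
    have hset1 : {x | η ≤ dist (∑ l ∈ Finset.range (L n + 1), (χ n l x - (P[χ n l|F n l]) x))
        ((fun _ => (0:ℝ)) x)}
        = {ω | η ≤ |∑ l ∈ Finset.range (L n + 1), (χ n l ω - (P[χ n l|F n l]) ω)|} := by
      ext ω; simp [Real.dist_eq]
    have hset2 : {x | ε ≤ dist ((fun n ω => ∑ l ∈ Finset.range (L n + 1),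
        (P[fun ω' => (χ n l ω') ^ 2|F n l]) ω) n x) ((fun _ => (0:ℝ)) x)}
        = {ω | ε ≤ |∑ l ∈ Finset.range (L n + 1), (P[fun ω' => (χ n l ω') ^ 2|F n l]) ω|} := by
      ext ω; simp [Real.dist_eq]
    calc P {x | η ≤ dist (∑ l ∈ Finset.range (L n + 1), (χ n l x - (P[χ n l|F n l]) x))
          ((fun _ => (0:ℝ)) x)}
        ≤ ENNReal.ofReal (ε / η ^ 2)
          + P {ω | ε ≤ |∑ l ∈ Finset.range (L n + 1), (P[fun ω' => (χ n l ω') ^ 2|F n l]) ω|} := by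
          rw [hset1]; exact hkey
      _ ≤ δ' / 2 + δ' / 2 := by
          rw [hofReal]
          refine add_le_add_right ?_ _
          rw [← hset2]
          exact (hM n hn).le
      _ = δ' := ENNReal.add_halves δ'
      _ ≤ δ := min_le_left δ 1
  have hadd := tendstoInMeasure_add' hD h1
  refine (hadd.congr (fun n => Eventually.of_forall fun ω => ?_)
    (Eventually.of_forall fun ω => zero_add (U ω)))
  rw [← Finset.sum_add_distrib]
  exact Finset.sum_congr rfl fun l hl => sub_add_cancel _ _
end

section
/- Suppose μ((0,1)) > 0. Then for every k ≥ 1, the (k+1)×(k+1) symmetric tridiagonal matrix K̃ with K̃_{0,0} = v₁, K̃_{j,j} = v₁ + v₂ for 1 ≤ j ≤ k−1, K̃_{k,k} = v₂, K̃_{j,j+1} = K̃_{j+1,j} = c for 0 ≤ j ≤ k−1, and all other entries 0, is positive definite; in particular it is invertible. -/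
open MeasureTheory Matrix


lemma cover_right (μ : Measure ℝ) (h : ∀ x : ℝ, x ∈ Set.Ioo (0:ℝ) 1 → μ (Set.Icc x 1) = 0) :
    μ (Set.Ioo (0:ℝ) 1) = 0 := by
  have hmem : ∀ n : ℕ, (1/((n:ℝ)+2) : ℝ) ∈ Set.Ioo (0:ℝ) 1 := by
    intro n
    have hn : (0:ℝ) ≤ n := Nat.cast_nonneg n
    constructor
    · positivity
    · rw [div_lt_one (by positivity)]; linarith
  refine measure_mono_null (fun x hx => ?_)
    (measure_iUnion_null (s := fun n : ℕ => Set.Icc (1/((n:ℝ)+2):ℝ) 1) (fun n => h _ (hmem n)))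
  obtain ⟨n, hn⟩ := exists_nat_one_div_lt hx.1
  refine Set.mem_iUnion.2 ⟨n, ⟨?_, hx.2.le⟩⟩
  have h2 : (1/((n:ℝ)+2) : ℝ) ≤ 1/((n:ℝ)+1) :=
    one_div_le_one_div_of_le (by positivity) (by linarith)
  linarith

lemma cover_left (μ : Measure ℝ) (h : ∀ x : ℝ, x ∈ Set.Ioo (0:ℝ) 1 → μ (Set.Icc 0 x) = 0) :
    μ (Set.Ioo (0:ℝ) 1) = 0 := by
  have hmem : ∀ n : ℕ, (1 - 1/((n:ℝ)+2) : ℝ) ∈ Set.Ioo (0:ℝ) 1 := by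
    intro n
    have hn : (0:ℝ) ≤ n := Nat.cast_nonneg n
    have h1 : (0:ℝ) < 1/((n:ℝ)+2) := by positivity
    have h2 : (1/((n:ℝ)+2) : ℝ) < 1 := by rw [div_lt_one (by positivity)]; linarith
    exact ⟨by linarith, by linarith⟩
  refine measure_mono_null (fun x hx => ?_)
    (measure_iUnion_null (s := fun n : ℕ => Set.Icc (0:ℝ) (1 - 1/((n:ℝ)+2))) (fun n => h _ (hmem n)))
  obtain ⟨n, hn⟩ := exists_nat_one_div_lt (sub_pos.2 hx.2)
  refine Set.mem_iUnion.2 ⟨n, ⟨hx.1.le, ?_⟩⟩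
  have h2 : (1/((n:ℝ)+2) : ℝ) ≤ 1/((n:ℝ)+1) :=
    one_div_le_one_div_of_le (by positivity) (by linarith [Nat.cast_nonneg (α := ℝ) n])
  linarith

lemma cover_mid (μ : Measure ℝ)
    (h : ∀ s t : ℝ, s ∈ Set.Ioo (0:ℝ) 1 → t ∈ Set.Ioo (0:ℝ) 1 → s ≤ t → μ (Set.Ioc s t) = 0) :
    μ (Set.Ioo (0:ℝ) 1) = 0 := by
  have key : ∀ n : ℕ, μ (Set.Ioc (1/((n:ℝ)+3)) (1 - 1/((n:ℝ)+3))) = 0 := by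
    intro n
    have hn : (0:ℝ) ≤ n := Nat.cast_nonneg n
    have h1 : (0:ℝ) < 1/((n:ℝ)+3) := by positivity
    have h2 : (1/((n:ℝ)+3) : ℝ) ≤ 1/3 :=
      one_div_le_one_div_of_le (by norm_num) (by linarith)
    exact h _ _ ⟨h1, by linarith⟩ ⟨by linarith, by linarith⟩ (by linarith)
  refine measure_mono_null (fun x hx => ?_) (measure_iUnion_null key)
  obtain ⟨n, hn⟩ := exists_nat_one_div_lt (lt_min hx.1 (sub_pos.2 hx.2))
  have hna := lt_of_lt_of_le hn (min_le_left _ _)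
  have hnb := lt_of_lt_of_le hn (min_le_right _ _)
  have h2 : (1/((n:ℝ)+3) : ℝ) ≤ 1/((n:ℝ)+1) :=
    one_div_le_one_div_of_le (by positivity) (by linarith [Nat.cast_nonneg (α := ℝ) n])
  exact Set.mem_iUnion.2 ⟨n, ⟨by linarith, by linarith⟩⟩

lemma exists_mem_of_ae (E : Set ℝ)
    (hE : ∀ᵐ s ∂(volume.restrict (Set.Icc (0:ℝ) 1)), s ∈ E)
    (u v : ℝ) (h0 : 0 ≤ u) (huv : u < v) (h1 : v ≤ 1) :
    ∃ s, s ∈ Set.Ioo u v ∧ s ∈ E := by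
  by_contra hcon
  push_neg at hcon
  have h0' : (volume.restrict (Set.Icc (0:ℝ) 1)) {s | ¬ s ∈ E} = 0 := by
    rw [← ae_iff]; exact hE
  have hz : (volume.restrict (Set.Icc (0:ℝ) 1)) (Set.Ioo u v) = 0 :=
    measure_mono_null (fun s hs => hcon s hs) h0'
  rw [Measure.restrict_apply measurableSet_Ioo,
    Set.inter_eq_left.2 (fun s hs => Set.mem_Icc.2 ⟨le_trans h0 hs.1.le, le_trans hs.2.le h1⟩),
    Real.volume_Ioo] at hz
  rw [ENNReal.ofReal_eq_zero] at hz
  linarith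

lemma intOn01 (f : ℝ → ℝ) (hm : Measurable f) (h0 : ∀ s, 0 ≤ f s) (h1 : ∀ s, f s ≤ 1) :
    IntegrableOn f (Set.Icc (0:ℝ) 1) := by
  have hconst : IntegrableOn (fun _ : ℝ => (1:ℝ)) (Set.Icc (0:ℝ) 1) :=
    integrableOn_const measure_Icc_lt_top.ne
  exact hconst.mono' hm.aestronglyMeasurable
    (ae_of_all _ fun s => by rw [Real.norm_eq_abs, abs_of_nonneg (h0 s)]; exact h1 s)

lemma Ktilde_aux_analysis
    (μ : Measure ℝ) [IsProbabilityMeasure μ] (hμsupp : μ (Set.Icc (0 : ℝ) 1)ᶜ = 0)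
    (hμ : 0 < μ (Set.Ioo (0 : ℝ) 1))
    (v₁ v₂ c : ℝ)
    (hv₁ : v₁ = ∫ s in Set.Icc (0 : ℝ) 1, ((μ (Set.Icc s 1)).toReal) ^ 2)
    (hv₂ : v₂ = ∫ s in Set.Icc (0 : ℝ) 1, ((μ (Set.Icc 0 s)).toReal) ^ 2)
    (hc : c = ∫ s in Set.Icc (0 : ℝ) 1, (μ (Set.Icc 0 s)).toReal * (μ (Set.Icc s 1)).toReal) :
    0 < v₁ ∧ 0 < v₂ ∧ c^2 < v₁ * v₂ := by
  classical
  let a : ℝ → ℝ := fun s => (μ (Set.Icc s 1)).toReal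
  let b : ℝ → ℝ := fun s => (μ (Set.Icc 0 s)).toReal
  set ν := volume.restrict (Set.Icc (0:ℝ) 1) with hν
  have hv₁' : v₁ = ∫ s in Set.Icc (0:ℝ) 1, a s ^ 2 := hv₁
  have hv₂' : v₂ = ∫ s in Set.Icc (0:ℝ) 1, b s ^ 2 := hv₂
  have hc' : c = ∫ s in Set.Icc (0:ℝ) 1, b s * a s := hc
  have ha_anti : Antitone a := fun s t hst =>
    ENNReal.toReal_mono (measure_ne_top μ _) (measure_mono (Set.Icc_subset_Icc_left hst))
  have hb_mono : Monotone b := fun s t hst =>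
    ENNReal.toReal_mono (measure_ne_top μ _) (measure_mono (Set.Icc_subset_Icc_right hst))
  have ha_meas : Measurable a := ha_anti.measurable
  have hb_meas : Measurable b := hb_mono.measurable
  have ha0 : ∀ s, 0 ≤ a s := fun s => ENNReal.toReal_nonneg
  have hb0 : ∀ s, 0 ≤ b s := fun s => ENNReal.toReal_nonneg
  have hle1 : ∀ t : Set ℝ, (μ t).toReal ≤ 1 := fun t => by
    rw [show (1:ℝ) = (μ Set.univ).toReal by simp]
    exact ENNReal.toReal_mono (measure_ne_top μ _) (measure_mono (Set.subset_univ _))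
  have ha1 : ∀ s, a s ≤ 1 := fun s => hle1 _
  have hb1 : ∀ s, b s ≤ 1 := fun s => hle1 _
  have ha2int : IntegrableOn (fun s => a s ^ 2) (Set.Icc (0:ℝ) 1) :=
    intOn01 _ (by fun_prop) (fun s => by positivity)
      (fun s => by rw [sq]; exact mul_le_one₀ (ha1 s) (ha0 s) (ha1 s))
  have hb2int : IntegrableOn (fun s => b s ^ 2) (Set.Icc (0:ℝ) 1) :=
    intOn01 _ (by fun_prop) (fun s => by positivity)
      (fun s => by rw [sq]; exact mul_le_one₀ (hb1 s) (hb0 s) (hb1 s))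
  have habint : IntegrableOn (fun s => b s * a s) (Set.Icc (0:ℝ) 1) :=
    intOn01 _ (by fun_prop) (fun s => mul_nonneg (hb0 s) (ha0 s))
      (fun s => mul_le_one₀ (hb1 s) (ha0 s) (ha1 s))
  have hone : μ (Set.Icc (0:ℝ) 1) = 1 := by
    have h := measure_add_measure_compl (μ := μ) (measurableSet_Icc (a := (0:ℝ)) (b := 1))
    rw [hμsupp, add_zero, measure_univ] at h
    exact h
  have hatoms : ∀ᵐ s ∂ν, a s + b s = 1 := by
    have hcnt : Set.Countable {x : ℝ | μ {x} ≠ 0} := by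
      have hc2 := Measure.countable_meas_pos_of_disjoint_iUnion (μ := μ)
        (As := fun x : ℝ => {x}) (fun x => measurableSet_singleton x)
        (fun x y hxy => Set.disjoint_singleton.2 hxy)
      exact hc2.mono fun x hx => pos_iff_ne_zero.2 hx
    have hvol : ν {x : ℝ | μ {x} ≠ 0} = 0 :=
      le_antisymm (le_trans (Measure.restrict_le_self _) (hcnt.measure_zero _).le) (by simp)
    have hae1 : ∀ᵐ s ∂ν, ¬ (μ {s} ≠ 0) := measure_eq_zero_iff_ae_notMem.1 hvol
    filter_upwards [hae1, ae_restrict_mem measurableSet_Icc] with s hs hmem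
    have hs0 : μ {s} = 0 := not_not.1 hs
    have hu : Set.Icc (0:ℝ) s ∪ Set.Icc s 1 = Set.Icc (0:ℝ) 1 :=
      Set.Icc_union_Icc_eq_Icc hmem.1 hmem.2
    have hi : Set.Icc (0:ℝ) s ∩ Set.Icc s 1 = {s} :=
      Set.Icc_inter_Icc_eq_singleton hmem.1 hmem.2
    have hsum := measure_union_add_inter (μ := μ) (Set.Icc (0:ℝ) s)
      (measurableSet_Icc (a := s) (b := (1:ℝ)))
    rw [hu, hi, hone, hs0, add_zero] at hsum
    have h2 := congrArg ENNReal.toReal hsum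
    rw [ENNReal.toReal_add (measure_ne_top μ _) (measure_ne_top μ _)] at h2
    simp only [ENNReal.toReal_one] at h2
    show a s + b s = 1
    simp only [a, b]
    linarith
  -- positivity of v₁
  have hv₁pos : 0 < v₁ := by
    rcases lt_or_ge 0 v₁ with h | h
    · exact h
    exfalso
    have hnn : 0 ≤ v₁ := hv₁' ▸ setIntegral_nonneg measurableSet_Icc (fun s _ => sq_nonneg _)
    have hzero : (∫ s in Set.Icc (0:ℝ) 1, a s ^ 2) = 0 := by rw [← hv₁']; linarith
    have haez : ∀ᵐ s ∂ν, a s = 0 := by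
      have h2 := (integral_eq_zero_iff_of_nonneg_ae
        (ae_of_all _ fun s => sq_nonneg (a s)) ha2int).1 hzero
      filter_upwards [h2] with s hs
      have : a s ^ 2 = 0 := hs
      exact pow_eq_zero_iff two_ne_zero |>.1 this
    have hall : ∀ x ∈ Set.Ioo (0:ℝ) 1, μ (Set.Icc x 1) = 0 := by
      intro x hx
      obtain ⟨s, hsIoo, hsE⟩ := exists_mem_of_ae {s | a s = 0} haez 0 x le_rfl hx.1 hx.2.le
      have hax : a x = 0 := le_antisymm (hsE ▸ ha_anti hsIoo.2.le) (ha0 x)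
      rcases (ENNReal.toReal_eq_zero_iff _).1 hax with h' | h'
      · exact h'
      · exact absurd h' (measure_ne_top μ _)
    exact absurd (cover_right μ hall) hμ.ne'
  have hv₂pos : 0 < v₂ := by
    rcases lt_or_ge 0 v₂ with h | h
    · exact h
    exfalso
    have hnn : 0 ≤ v₂ := hv₂' ▸ setIntegral_nonneg measurableSet_Icc (fun s _ => sq_nonneg _)
    have hzero : (∫ s in Set.Icc (0:ℝ) 1, b s ^ 2) = 0 := by rw [← hv₂']; linarith
    have hbez : ∀ᵐ s ∂ν, b s = 0 := by
      have h2 := (integral_eq_zero_iff_of_nonneg_ae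
        (ae_of_all _ fun s => sq_nonneg (b s)) hb2int).1 hzero
      filter_upwards [h2] with s hs
      have : b s ^ 2 = 0 := hs
      exact pow_eq_zero_iff two_ne_zero |>.1 this
    have hall : ∀ x ∈ Set.Ioo (0:ℝ) 1, μ (Set.Icc 0 x) = 0 := by
      intro x hx
      obtain ⟨s, hsIoo, hsE⟩ := exists_mem_of_ae {s | b s = 0} hbez x 1 hx.1.le hx.2 le_rfl
      have hbx : b x = 0 := le_antisymm (hsE ▸ hb_mono hsIoo.1.le) (hb0 x)
      rcases (ENNReal.toReal_eq_zero_iff _).1 hbx with h' | h'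
      · exact h'
      · exact absurd h' (measure_ne_top μ _)
    exact absurd (cover_left μ hall) hμ.ne'
  have hc0 : 0 ≤ c := hc' ▸ setIntegral_nonneg measurableSet_Icc
    (fun s _ => mul_nonneg (hb0 s) (ha0 s))
  refine ⟨hv₁pos, hv₂pos, ?_⟩
  by_contra hcon
  push_neg at hcon
  -- ∫ (v₂ a - c b)^2 = v₂ (v₂ v₁ - c²) ≤ 0
  have hrw : (fun s => (v₂ * a s - c * b s)^2)
      = fun s => v₂^2 * (a s^2) - 2*(v₂*c) * (b s * a s) + c^2 * (b s^2) := funext fun s => by ring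
  have hintA : IntegrableOn (fun s => v₂^2 * (a s^2)) (Set.Icc (0:ℝ) 1) := ha2int.const_mul _
  have hintB : IntegrableOn (fun s => 2*(v₂*c) * (b s * a s)) (Set.Icc (0:ℝ) 1) :=
    habint.const_mul _
  have hintC : IntegrableOn (fun s => c^2 * (b s^2)) (Set.Icc (0:ℝ) 1) := hb2int.const_mul _
  have hintAB : IntegrableOn (fun s => v₂^2 * (a s^2) - 2*(v₂*c) * (b s * a s))
      (Set.Icc (0:ℝ) 1) := hintA.sub hintB
  have hgint : IntegrableOn (fun s => (v₂ * a s - c * b s)^2) (Set.Icc (0:ℝ) 1) := by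
    rw [hrw]
    exact hintAB.add hintC
  have hginteq : (∫ s in Set.Icc (0:ℝ) 1, (v₂ * a s - c * b s)^2)
      = v₂^2 * v₁ - 2*(v₂*c)*c + c^2*v₂ := by
    rw [hrw, integral_add hintAB hintC, integral_sub hintA hintB,
      integral_const_mul, integral_const_mul, integral_const_mul, ← hv₁', ← hv₂', ← hc']
  have hg0 : 0 ≤ ∫ s in Set.Icc (0:ℝ) 1, (v₂ * a s - c * b s)^2 :=
    setIntegral_nonneg measurableSet_Icc fun s _ => sq_nonneg _
  have hgzero : (∫ s in Set.Icc (0:ℝ) 1, (v₂ * a s - c * b s)^2) = 0 := by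
    refine le_antisymm ?_ hg0
    rw [hginteq]
    nlinarith
  have haeq : ∀ᵐ s ∂ν, v₂ * a s = c * b s := by
    have h2 := (integral_eq_zero_iff_of_nonneg_ae
      (ae_of_all _ fun s => sq_nonneg _) hgint).1 hgzero
    filter_upwards [h2] with s hs
    have h3 : (v₂ * a s - c * b s)^2 = 0 := hs
    have := pow_eq_zero_iff two_ne_zero |>.1 h3
    linarith [sub_eq_zero.1 this]
  have hvc : (0:ℝ) < v₂ + c := by linarith
  set β : ℝ := v₂ / (v₂ + c) with hβ
  have hbeta : ∀ᵐ s ∂ν, b s = β := by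
    filter_upwards [haeq, hatoms] with s h1 h2
    rw [hβ, eq_div_iff hvc.ne']
    linear_combination -h1 + v₂ * h2
  have hconst : ∀ x ∈ Set.Ioo (0:ℝ) 1, b x = β := by
    intro x hx
    obtain ⟨s, hsIoo, hsE⟩ := exists_mem_of_ae {s | b s = β} hbeta 0 x le_rfl hx.1 hx.2.le
    obtain ⟨t, htIoo, htE⟩ := exists_mem_of_ae {s | b s = β} hbeta x 1 hx.1.le hx.2 le_rfl
    exact le_antisymm (htE ▸ hb_mono htIoo.1.le) (hsE ▸ hb_mono hsIoo.2.le)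
  have hIoc : ∀ s t : ℝ, s ∈ Set.Ioo (0:ℝ) 1 → t ∈ Set.Ioo (0:ℝ) 1 → s ≤ t →
      μ (Set.Ioc s t) = 0 := by
    intro s t hs ht hst
    have hbe : μ (Set.Icc 0 t) = μ (Set.Icc 0 s) := by
      have := (hconst t ht).trans (hconst s hs).symm
      exact (ENNReal.toReal_eq_toReal_iff' (measure_ne_top μ _) (measure_ne_top μ _)).1 this
    have hsub : Set.Icc (0:ℝ) s ⊆ Set.Icc (0:ℝ) t := Set.Icc_subset_Icc_right hst
    have hdiff : μ (Set.Icc (0:ℝ) t \ Set.Icc (0:ℝ) s) = 0 := by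
      rw [measure_diff hsub measurableSet_Icc.nullMeasurableSet (measure_ne_top μ _), hbe,
        tsub_self]
    refine measure_mono_null (fun x hx => ?_) hdiff
    exact ⟨⟨le_trans hs.1.le hx.1.le, hx.2⟩, fun hmem => absurd hmem.2 (not_le.2 hx.1)⟩
  exact absurd (cover_mid μ hIoc) hμ.ne'


/-- The `(k+1) × (k+1)` symmetric tridiagonal matrix `K̃` with `K̃_{0,0} = v₁`,
`K̃_{j,j} = v₁ + v₂` for `1 ≤ j ≤ k-1`, `K̃_{k,k} = v₂`, off-diagonal entries `c` on
the sub- and super-diagonals, and `0` elsewhere. -/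
def Ktilde (k : ℕ) (v₁ v₂ c : ℝ) : Matrix (Fin (k + 1)) (Fin (k + 1)) ℝ := fun i j =>
  if i = j then (if (i : ℕ) = 0 then v₁ else if (i : ℕ) = k then v₂ else v₁ + v₂)
  else if (i : ℕ) + 1 = (j : ℕ) ∨ (j : ℕ) + 1 = (i : ℕ) then c else 0

lemma Ktilde_herm (k : ℕ) (v₁ v₂ c : ℝ) : (Ktilde k v₁ v₂ c).IsHermitian := by
  ext i j
  simp only [Matrix.conjTranspose_apply, Ktilde, star_trivial]
  by_cases h : i = j
  · subst h; simp
  · rw [if_neg (fun hh => h hh.symm), if_neg h]; exact if_congr or_comm rfl rfl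

lemma Ktilde_quadform (k : ℕ) (hk : 1 ≤ k) (v₁ v₂ c : ℝ) (x : Fin (k+1) → ℝ) :
    x ⬝ᵥ ((Ktilde k v₁ v₂ c) *ᵥ x) =
      ∑ j : Fin k, (v₁ * x j.castSucc ^ 2 + 2*c* (x j.castSucc * x j.succ) + v₂ * x j.succ ^ 2) := by
  have hLHS : x ⬝ᵥ ((Ktilde k v₁ v₂ c) *ᵥ x)
      = ∑ i : Fin (k+1), ∑ j : Fin (k+1), x i * (Ktilde k v₁ v₂ c i j * x j) := by
    simp [dotProduct, Matrix.mulVec, Finset.mul_sum]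
  have hsplit : ∀ i j : Fin (k+1), x i * (Ktilde k v₁ v₂ c i j * x j)
      = (if j = i then ((if (i:ℕ) < k then v₁ else 0) + (if 0 < (i:ℕ) then v₂ else 0)) * (x i * x j) else 0)
      + (if (j:ℕ) = (i:ℕ)+1 then c * (x i * x j) else 0)
      + (if (i:ℕ) = (j:ℕ)+1 then c * (x i * x j) else 0) := by
    intro i j
    simp only [Ktilde, Fin.ext_iff]
    split_ifs
    any_goals ring
    all_goals (exfalso; omega)
  rw [hLHS]
  simp only [hsplit, Finset.sum_add_distrib]
  have h1 : ∑ i : Fin (k+1), ∑ j : Fin (k+1),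
      (if j = i then ((if (i:ℕ) < k then v₁ else 0) + (if 0 < (i:ℕ) then v₂ else 0)) * (x i * x j) else 0)
      = ∑ i : Fin (k+1), ((if (i:ℕ) < k then v₁ * (x i * x i) else 0) + (if 0 < (i:ℕ) then v₂ * (x i * x i) else 0)) := by
    refine Finset.sum_congr rfl fun i _ => ?_
    rw [Finset.sum_ite_eq' Finset.univ i]
    simp only [Finset.mem_univ, if_true]
    split_ifs <;> ring
  have h2 : ∑ i : Fin (k+1), ∑ j : Fin (k+1), (if (j:ℕ) = (i:ℕ)+1 then c * (x i * x j) else 0)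
      = ∑ p : Fin k, c * (x p.castSucc * x p.succ) := by
    rw [Fin.sum_univ_castSucc]
    have hlast : ∑ j : Fin (k+1), (if (j:ℕ) = ((Fin.last k : Fin (k+1)):ℕ)+1 then c * (x (Fin.last k) * x j) else 0) = 0 := by
      refine Finset.sum_eq_zero fun j _ => if_neg (by simp; omega)
    rw [hlast, add_zero]
    refine Finset.sum_congr rfl fun p _ => ?_
    rw [Finset.sum_eq_single p.succ]
    · rw [if_pos (by simp)]
    · intro b _ hb
      refine if_neg fun hh => hb (Fin.ext ?_)
      simp only [Fin.val_succ, Fin.coe_castSucc] at *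
      omega
    · simp
  have h3 : ∑ i : Fin (k+1), ∑ j : Fin (k+1), (if (i:ℕ) = (j:ℕ)+1 then c * (x i * x j) else 0)
      = ∑ p : Fin k, c * (x p.succ * x p.castSucc) := by
    rw [Fin.sum_univ_succ]
    have hzero : ∑ j : Fin (k+1), (if ((0 : Fin (k+1)):ℕ) = (j:ℕ)+1 then c * (x 0 * x j) else 0) = 0 := by
      refine Finset.sum_eq_zero fun j _ => if_neg (by simp)
    rw [hzero, zero_add]
    refine Finset.sum_congr rfl fun p _ => ?_
    rw [Finset.sum_eq_single p.castSucc]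
    · rw [if_pos (by simp)]
    · intro b _ hb
      refine if_neg fun hh => hb (Fin.ext ?_)
      simp only [Fin.val_succ, Fin.coe_castSucc] at *
      omega
    · simp
  rw [h1, h2, h3, Finset.sum_add_distrib]
  have eA : ∑ i : Fin (k+1), (if (i:ℕ) < k then v₁ * (x i * x i) else 0)
      = ∑ j : Fin k, v₁ * (x j.castSucc * x j.castSucc) := by
    rw [Fin.sum_univ_castSucc]
    simp [Fin.is_lt]
  have eB : ∑ i : Fin (k+1), (if 0 < (i:ℕ) then v₂ * (x i * x i) else 0)
      = ∑ j : Fin k, v₂ * (x j.succ * x j.succ) := by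
    rw [Fin.sum_univ_succ]
    simp
  rw [eA, eB]
  simp only [← Finset.sum_add_distrib]
  exact Finset.sum_congr rfl fun j _ => by ring

lemma Ktilde_posDef_of (k : ℕ) (hk : 1 ≤ k) (v₁ v₂ c : ℝ)
    (hv₁ : 0 < v₁) (hv₂ : 0 < v₂) (hd : c^2 < v₁ * v₂) :
    (Ktilde k v₁ v₂ c).PosDef := by
  refine Matrix.PosDef.of_dotProduct_mulVec_pos (Ktilde_herm k v₁ v₂ c) (fun x hx => ?_)
  have hstar : star x = x := rfl
  rw [hstar, Ktilde_quadform k hk v₁ v₂ c x]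
  obtain ⟨i, hi⟩ := Function.ne_iff.1 hx
  have key : ∀ j : Fin k, x j.castSucc ≠ 0 ∨ x j.succ ≠ 0 →
      0 < v₁ * x j.castSucc ^ 2 + 2*c* (x j.castSucc * x j.succ) + v₂ * x j.succ ^ 2 := by
    intro j hj
    set A := x j.castSucc
    set B := x j.succ
    rcases hj with hA | hB
    · rcases eq_or_ne B 0 with hB | hB
      · rw [hB]
        have : 0 < A^2 := by positivity
        nlinarith
      · have hB2 : 0 < B^2 := by positivity
        nlinarith [sq_nonneg (v₁ * A + c * B), sq_nonneg A]
    · have hB2 : 0 < B^2 := by positivity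
      nlinarith [sq_nonneg (v₁ * A + c * B), sq_nonneg A]
  have nonneg : ∀ j : Fin k,
      0 ≤ v₁ * x j.castSucc ^ 2 + 2*c* (x j.castSucc * x j.succ) + v₂ * x j.succ ^ 2 := by
    intro j
    nlinarith [sq_nonneg (v₁ * x j.castSucc + c * x j.succ), sq_nonneg (x j.succ)]
  refine Finset.sum_pos' (fun j _ => nonneg j) ?_
  by_cases h : (i:ℕ) < k
  · refine ⟨⟨(i:ℕ), h⟩, Finset.mem_univ _, key _ (Or.inl ?_)⟩
    have : (⟨(i:ℕ), h⟩ : Fin k).castSucc = i := Fin.ext (by simp)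
    rw [this]; exact hi
  · refine ⟨⟨k-1, by omega⟩, Finset.mem_univ _, key _ (Or.inr ?_)⟩
    have : (⟨k-1, by omega⟩ : Fin k).succ = i := Fin.ext (by simp; omega)
    rw [this]; exact hi

/-- if `μ` is a probability measure on `[0,1]` with `μ((0,1)) > 0` then, with
`v₁ = ∫₀¹ μ([s,1])² ds`, `v₂ = ∫₀¹ μ([0,s])² ds` and `c = ∫₀¹ μ([0,s])μ([s,1]) ds`,
the matrix `K̃` is positive definite, and in particular invertible. -/
theorem Ktilde_posDef
    (μ : Measure ℝ) [IsProbabilityMeasure μ] (hμsupp : μ (Set.Icc (0 : ℝ) 1)ᶜ = 0)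
    (hμ : 0 < μ (Set.Ioo (0 : ℝ) 1))
    (k : ℕ) (hk : 1 ≤ k)
    (v₁ v₂ c : ℝ)
    (hv₁ : v₁ = ∫ s in Set.Icc (0 : ℝ) 1, ((μ (Set.Icc s 1)).toReal) ^ 2)
    (hv₂ : v₂ = ∫ s in Set.Icc (0 : ℝ) 1, ((μ (Set.Icc 0 s)).toReal) ^ 2)
    (hc : c = ∫ s in Set.Icc (0 : ℝ) 1, (μ (Set.Icc 0 s)).toReal * (μ (Set.Icc s 1)).toReal) :
    (Ktilde k v₁ v₂ c).PosDef ∧ IsUnit (Ktilde k v₁ v₂ c).det := by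
  obtain ⟨h1, h2, h3⟩ := Ktilde_aux_analysis μ hμsupp hμ v₁ v₂ c hv₁ hv₂ hc
  have hPD := Ktilde_posDef_of k hk v₁ v₂ c h1 h2 h3
  exact ⟨hPD, hPD.det_pos.ne'.isUnit⟩
end

section
/- Suppose μ((0,1)) > 0. Then v₁ > 0, v₂ > 0, and c² < v₁ · v₂. -/
open MeasureTheory

private lemma cover01' : Set.Ioo (0:ℝ) 1 ⊆ ⋃ n : ℕ, Set.Icc (1/(n+2):ℝ) (1 - 1/(n+2)) := by
  intro x hx
  have h1 : 0 < min x (1 - x) := lt_min hx.1 (by linarith [hx.2])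
  obtain ⟨n, hn⟩ := exists_nat_one_div_lt h1
  refine Set.mem_iUnion.2 ⟨n, ?_⟩
  have h2 : (1:ℝ)/(n+2) ≤ 1/(n+1) := by
    apply one_div_le_one_div_of_le
    · positivity
    · linarith
  have hx1 : (1:ℝ)/(n+1) < x := lt_of_lt_of_le hn (min_le_left _ _)
  have hx2 : (1:ℝ)/(n+1) < 1 - x := lt_of_lt_of_le hn (min_le_right _ _)
  exact ⟨by linarith, by linarith⟩

/-- if `μ` is a probability measure on `[0,1]` with `μ((0,1)) > 0` then, with
`v₁ = ∫₀¹ μ([s,1])² ds`, `v₂ = ∫₀¹ μ([0,s])² ds` and `c = ∫₀¹ μ([0,s])μ([s,1]) ds`, one has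
`v₁ > 0`, `v₂ > 0` and `c² < v₁ v₂`. -/
theorem v1_pos_v2_pos_and_c_sq_lt_v1_mul_v2
    (μ : Measure ℝ) [IsProbabilityMeasure μ] (hμsupp : μ (Set.Icc (0 : ℝ) 1)ᶜ = 0)
    (hμ : 0 < μ (Set.Ioo (0 : ℝ) 1))
    (v₁ v₂ c : ℝ)
    (hv₁ : v₁ = ∫ s in Set.Icc (0 : ℝ) 1, ((μ (Set.Icc s 1)).toReal) ^ 2)
    (hv₂ : v₂ = ∫ s in Set.Icc (0 : ℝ) 1, ((μ (Set.Icc 0 s)).toReal) ^ 2)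
    (hc : c = ∫ s in Set.Icc (0 : ℝ) 1, (μ (Set.Icc 0 s)).toReal * (μ (Set.Icc s 1)).toReal) :
    0 < v₁ ∧ 0 < v₂ ∧ c ^ 2 < v₁ * v₂ := by
  set f : ℝ → ℝ := fun s => (μ (Set.Icc 0 s)).toReal with hf
  set g : ℝ → ℝ := fun s => (μ (Set.Icc s 1)).toReal with hg
  have hfmono : Monotone f := fun a b hab =>
    ENNReal.toReal_mono (measure_ne_top μ _) (measure_mono (Set.Icc_subset_Icc_right hab))
  have hganti : Antitone g := fun a b hab =>
    ENNReal.toReal_mono (measure_ne_top μ _) (measure_mono (Set.Icc_subset_Icc_left hab))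
  have hfm : Measurable f := hfmono.measurable
  have hgm : Measurable g := hganti.measurable
  have hf0 : ∀ s, 0 ≤ f s := fun s => ENNReal.toReal_nonneg
  have hg0 : ∀ s, 0 ≤ g s := fun s => ENNReal.toReal_nonneg
  have hf1 : ∀ s, f s ≤ 1 := fun s => by
    have := prob_le_one (μ := μ) (s := Set.Icc 0 s)
    simpa using ENNReal.toReal_mono ENNReal.one_ne_top this
  have hg1 : ∀ s, g s ≤ 1 := fun s => by
    have := prob_le_one (μ := μ) (s := Set.Icc s 1)
    simpa using ENNReal.toReal_mono ENNReal.one_ne_top this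
  -- integrability of bounded measurable functions on [0,1]
  have hint : ∀ (φ : ℝ → ℝ), Measurable φ → (∀ s, ‖φ s‖ ≤ 1) →
      IntegrableOn φ (Set.Icc (0:ℝ) 1) := fun φ hm hb =>
    (integrable_const (1:ℝ)).mono' hm.aestronglyMeasurable (Filter.Eventually.of_forall hb)
  have bnd : ∀ x y : ℝ, 0 ≤ x → x ≤ 1 → 0 ≤ y → y ≤ 1 → ‖x * y‖ ≤ 1 := by
    intro x y h1 h2 h3 h4
    rw [Real.norm_eq_abs, abs_of_nonneg (mul_nonneg h1 h3)]
    nlinarith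
  have hint_f2 : IntegrableOn (fun s => f s ^ 2) (Set.Icc (0:ℝ) 1) :=
    hint _ (hfm.pow_const 2) (fun s => by
      have := bnd (f s) (f s) (hf0 s) (hf1 s) (hf0 s) (hf1 s); rw [sq]; exact this)
  have hint_g2 : IntegrableOn (fun s => g s ^ 2) (Set.Icc (0:ℝ) 1) :=
    hint _ (hgm.pow_const 2) (fun s => by
      have := bnd (g s) (g s) (hg0 s) (hg1 s) (hg0 s) (hg1 s); rw [sq]; exact this)
  have hint_fg : IntegrableOn (fun s => f s * g s) (Set.Icc (0:ℝ) 1) :=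
    hint _ (hfm.mul hgm) (fun s => bnd _ _ (hf0 s) (hf1 s) (hg0 s) (hg1 s))
  -- find an inner interval of positive μ-measure
  obtain ⟨n, hn⟩ : ∃ n : ℕ, μ (Set.Icc (1/(n+2):ℝ) (1 - 1/(n+2))) ≠ 0 := by
    by_contra h
    push_neg at h
    exact absurd (measure_mono_null cover01' (measure_iUnion_null h)) hμ.ne'
  set a : ℝ := 1/(n+2) with ha
  have ha0 : 0 < a := by positivity
  have hahalf : a ≤ 1/2 := by
    rw [ha]
    apply one_div_le_one_div_of_le <;> [norm_num; (push_cast; linarith)]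
  set m : ℝ := (μ (Set.Icc a (1 - a))).toReal with hm
  have hm0 : 0 < m := ENNReal.toReal_pos hn (measure_ne_top μ _)
  -- lower bounds for g on [0,a] and f on [1-a,1]
  have hgd : ∀ s ∈ Set.Icc (0:ℝ) a, m ≤ g s := by
    intro s hs
    exact ENNReal.toReal_mono (measure_ne_top μ _)
      (measure_mono (Set.Icc_subset_Icc hs.2 (by linarith)))
  have hfd : ∀ s ∈ Set.Icc (1-a) (1:ℝ), m ≤ f s := by
    intro s hs
    exact ENNReal.toReal_mono (measure_ne_top μ _)
      (measure_mono (Set.Icc_subset_Icc (by linarith) hs.1))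
  have hsub1 : Set.Icc (0:ℝ) a ⊆ Set.Icc (0:ℝ) 1 := Set.Icc_subset_Icc_right (by linarith)
  have hsub2 : Set.Icc (1-a) (1:ℝ) ⊆ Set.Icc (0:ℝ) 1 := Set.Icc_subset_Icc_left (by linarith)
  have key : ∀ (φ : ℝ → ℝ) (t : Set ℝ), MeasurableSet t → t ⊆ Set.Icc (0:ℝ) 1 →
      (∀ s, 0 ≤ φ s) → (∀ s ∈ t, m^2 ≤ φ s) → IntegrableOn φ (Set.Icc (0:ℝ) 1) →
      m^2 * (volume t).toReal ≤ ∫ s in Set.Icc (0:ℝ) 1, φ s := by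
    intro φ t htm htsub hpos hlb hintφ
    have h1 : m^2 * (volume t).toReal ≤ ∫ s in t, φ s :=
      setIntegral_ge_of_const_le_real htm
        (lt_of_le_of_lt (measure_mono htsub) measure_Icc_lt_top).ne
        hlb (hintφ.mono_set htsub)
    refine h1.trans (setIntegral_mono_set hintφ (Filter.Eventually.of_forall hpos)
      (HasSubset.Subset.eventuallyLE htsub))
  have hv₁' : v₁ = ∫ s in Set.Icc (0:ℝ) 1, g s ^ 2 := hv₁
  have hv₂' : v₂ = ∫ s in Set.Icc (0:ℝ) 1, f s ^ 2 := hv₂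
  have hc' : c = ∫ s in Set.Icc (0:ℝ) 1, f s * g s := hc
  have hva : (volume (Set.Icc (0:ℝ) a)).toReal = a := by
    simp [Real.volume_Icc, ha0.le]
  have hvb : (volume (Set.Icc (1-a) (1:ℝ))).toReal = a := by
    rw [Real.volume_Icc]
    rw [ENNReal.toReal_ofReal (by linarith)]
    ring
  have hv1pos : 0 < v₁ := by
    have := key (fun s => g s ^ 2) (Set.Icc 0 a) measurableSet_Icc hsub1
      (fun s => sq_nonneg _) (fun s hs => by nlinarith [hgd s hs, hg0 s]) hint_g2
    have this2 : m^2*a ≤ ∫ s in Set.Icc (0:ℝ) 1, g s ^ 2 := hva ▸ this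
    rw [hv₁']; linarith [this2, mul_pos (pow_pos hm0 2) ha0]
  have hv2pos : 0 < v₂ := by
    have := key (fun s => f s ^ 2) (Set.Icc (1-a) 1) measurableSet_Icc hsub2
      (fun s => sq_nonneg _) (fun s hs => by nlinarith [hfd s hs, hf0 s]) hint_f2
    have this2 : m^2*a ≤ ∫ s in Set.Icc (0:ℝ) 1, f s ^ 2 := hvb ▸ this
    rw [hv₂']; linarith [this2, mul_pos (pow_pos hm0 2) ha0]
  refine ⟨hv1pos, hv2pos, ?_⟩
  have hv1ne : v₁ ≠ 0 := hv1pos.ne'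
  set lam : ℝ := c / v₁ with hlam
  have hc0 : 0 ≤ c := by
    rw [hc']; exact setIntegral_nonneg measurableSet_Icc (fun s _ => mul_nonneg (hf0 s) (hg0 s))
  have hlam0 : 0 ≤ lam := div_nonneg hc0 hv1pos.le
  have hrw : (fun s => (f s - lam * g s)^2)
      = fun s => (f s^2 - (2*lam)*(f s * g s)) + lam^2 * g s^2 := funext fun s => by ring
  have hint_h2 : IntegrableOn (fun s => (f s - lam * g s)^2) (Set.Icc (0:ℝ) 1) := by
    rw [hrw]
    exact (hint_f2.sub (hint_fg.const_mul _)).add (hint_g2.const_mul _)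
  have i3 : IntegrableOn (fun s => (2*lam)*(f s * g s)) (Set.Icc (0:ℝ) 1) :=
    hint_fg.const_mul _
  have i2 : IntegrableOn (fun s => lam^2 * g s^2) (Set.Icc (0:ℝ) 1) :=
    hint_g2.const_mul _
  have i1 : IntegrableOn (fun s => f s^2 - (2*lam)*(f s * g s)) (Set.Icc (0:ℝ) 1) :=
    hint_f2.sub i3
  have hE : ∫ s in Set.Icc (0:ℝ) 1, (f s - lam * g s)^2 = v₂ - 2*lam*c + lam^2*v₁ := by
    rw [hrw, integral_add i1 i2, integral_sub hint_f2 i3, MeasureTheory.integral_const_mul,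
      MeasureTheory.integral_const_mul, ← hv₁', ← hv₂', ← hc']
  have hEpos : 0 < ∫ s in Set.Icc (0:ℝ) 1, (f s - lam * g s)^2 := by
    rcases lt_or_eq_of_le (setIntegral_nonneg measurableSet_Icc
      (fun s _ => sq_nonneg (f s - lam * g s))) with h | h
    · exact h
    exfalso
    have hzero : (fun s => (f s - lam * g s)^2) =ᵐ[volume.restrict (Set.Icc (0:ℝ) 1)] 0 :=
      (integral_eq_zero_iff_of_nonneg (fun s => sq_nonneg _) hint_h2).1 h.symm
    have hae : ∀ᵐ s ∂(volume : Measure ℝ), s ∈ Set.Icc (0:ℝ) 1 → f s = lam * g s := by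
      rw [← ae_restrict_iff' measurableSet_Icc]
      filter_upwards [hzero] with s hs
      have h1 : (f s - lam * g s)^2 = 0 := hs
      have h2 : f s - lam * g s = 0 := by
        exact pow_eq_zero_iff (two_ne_zero) |>.1 h1
      linarith
    set N := {s : ℝ | ¬ (s ∈ Set.Icc (0:ℝ) 1 → f s = lam * g s)} with hN
    have hNnull : volume N = 0 := ae_iff.1 hae
    have hnull : ∀ k : ℕ, μ (Set.Icc (1/(k+2):ℝ) (1 - 1/(k+2))) = 0 := by
      intro k
      set b : ℝ := 1/(k+2) with hb
      have hb0 : 0 < b := by positivity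
      have hbh : b ≤ 1/2 := by
        rw [hb]
        apply one_div_le_one_div_of_le
        · norm_num
        · push_cast; linarith
      have h1 : (Set.Ioo (0:ℝ) b \ N).Nonempty := by
        apply nonempty_of_measure_ne_zero (μ := (volume : Measure ℝ))
        rw [measure_diff_null hNnull, Real.volume_Ioo]
        simp only [sub_zero, ne_eq, ENNReal.ofReal_eq_zero, not_le]
        exact hb0
      obtain ⟨s₁, hs₁⟩ := h1
      have h2 : (Set.Ioo (1-b) (1:ℝ) \ N).Nonempty := by
        apply nonempty_of_measure_ne_zero (μ := (volume : Measure ℝ))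
        rw [measure_diff_null hNnull, Real.volume_Ioo]
        simp only [ne_eq, ENNReal.ofReal_eq_zero, not_le]
        linarith
      obtain ⟨s₂, hs₂⟩ := h2
      have hs₁I : s₁ ∈ Set.Icc (0:ℝ) 1 := ⟨hs₁.1.1.le, by linarith [hs₁.1.2]⟩
      have hs₂I : s₂ ∈ Set.Icc (0:ℝ) 1 := ⟨by linarith [hs₂.1.1], hs₂.1.2.le⟩
      have he₁ : f s₁ = lam * g s₁ := not_not.1 hs₁.2 hs₁I
      have he₂ : f s₂ = lam * g s₂ := not_not.1 hs₂.2 hs₂I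
      have hle : s₁ ≤ s₂ := by linarith [hs₁.1.2, hs₂.1.1]
      have hff : f s₁ = f s₂ := le_antisymm (hfmono hle) (by
        calc f s₂ = lam * g s₂ := he₂
          _ ≤ lam * g s₁ := mul_le_mul_of_nonneg_left (hganti hle) hlam0
          _ = f s₁ := he₁.symm)
      have hμeq : μ (Set.Icc 0 s₁) = μ (Set.Icc 0 s₂) :=
        (ENNReal.toReal_eq_toReal_iff' (measure_ne_top μ _) (measure_ne_top μ _)).1 hff
      have hdiff : μ (Set.Ioc s₁ s₂) = 0 := by
        have hset : Set.Ioc s₁ s₂ = Set.Icc 0 s₂ \ Set.Icc 0 s₁ := by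
          ext x
          simp only [Set.mem_Ioc, Set.mem_Icc, Set.mem_diff, not_and, not_le]
          constructor
          · rintro ⟨hx1, hx2⟩
            exact ⟨⟨le_trans hs₁.1.1.le hx1.le, hx2⟩, fun _ => hx1⟩
          · rintro ⟨⟨hx0, hx2⟩, hx1⟩
            exact ⟨hx1 hx0, hx2⟩
        rw [hset, measure_diff (Set.Icc_subset_Icc_right hle)
          measurableSet_Icc.nullMeasurableSet (measure_ne_top μ _), ← hμeq, tsub_self]
      refine measure_mono_null (fun x hx => ?_) hdiff
      exact ⟨lt_of_lt_of_le hs₁.1.2 hx.1, le_trans hx.2 hs₂.1.1.le⟩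
    exact absurd (measure_mono_null cover01' (measure_iUnion_null hnull)) hμ.ne'
  rw [hE] at hEpos
  have hlv : lam * v₁ = c := div_mul_cancel₀ c hv1ne
  have hmul : 0 < v₁ * (v₂ - 2*lam*c + lam^2*v₁) := mul_pos hv1pos hEpos
  have expand : v₁ * (v₂ - 2*lam*c + lam^2*v₁) = v₁*v₂ - 2*c*(lam*v₁) + (lam*v₁)^2 := by
    ring
  rw [expand, hlv] at hmul
  nlinarith [hmul]
end

section
/- Suppose μ((0,1)) > 0. Then for every m ≥ 1, the m×m symmetric tridiagonal Toeplitz matrix K̂ with all diagonal entries equal to v₁ + v₂, all entries on the sub- and super-diagonal equal to c, and all other entries 0, is positive definite; in particular it is invertible. -/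
open Matrix in
lemma tri_quad (d c : ℝ) : ∀ (m : ℕ) (y : ℕ → ℝ),
    ∑ i ∈ Finset.range m, ∑ j ∈ Finset.range m,
      (if i = j then d else if i + 1 = j ∨ j + 1 = i then c else 0) * (y i * y j)
    = (d - 2*c) * ∑ i ∈ Finset.range m, y i ^ 2
      + c * ((if m = 0 then 0 else y 0 ^ 2 + y (m-1) ^ 2)
             + ∑ i ∈ Finset.range (m-1), (y i + y (i+1)) ^ 2) := by
  intro m
  induction m with
  | zero => intro y; simp
  | succ n ih =>
    intro y
    cases n with
    | zero => simp [Finset.sum_range_succ]; ring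
    | succ n =>
      have ihy := ih y
      set f : ℕ → ℕ → ℝ := fun i j =>
        (if i = j then d else if i + 1 = j ∨ j + 1 = i then c else 0) * (y i * y j) with hf
      rw [if_neg (Nat.succ_ne_zero n)] at ihy
      simp only [Nat.add_sub_cancel] at ihy
      have key : ∀ i ∈ Finset.range (n+1),
          (∑ j ∈ Finset.range (n+1+1), f i j)
            = (∑ j ∈ Finset.range (n+1), f i j) + f i (n+1) :=
        fun i _ => Finset.sum_range_succ _ _
      rw [Finset.sum_range_succ, Finset.sum_congr rfl key, Finset.sum_add_distrib]
      have hB : ∑ i ∈ Finset.range (n+1), f i (n+1) = c * (y n * y (n+1)) := by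
        rw [Finset.sum_range_succ, Finset.sum_eq_zero (fun i hi => ?_), zero_add, hf]
        · beta_reduce
          rw [if_neg (by omega), if_pos (by omega)]
        · have hi' := Finset.mem_range.mp hi
          rw [hf]; beta_reduce
          rw [if_neg (by omega), if_neg (by omega), zero_mul]
      have hC : ∑ j ∈ Finset.range (n+1+1), f (n+1) j
          = c * (y (n+1) * y n) + d * (y (n+1) * y (n+1)) := by
        rw [Finset.sum_range_succ, Finset.sum_range_succ,
          Finset.sum_eq_zero (fun j hj => ?_), zero_add, hf]
        · beta_reduce
          rw [if_neg (by omega), if_pos (by omega), if_pos rfl]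
        · have hj' := Finset.mem_range.mp hj
          rw [hf]; beta_reduce
          rw [if_neg (by omega), if_neg (by omega), zero_mul]
      rw [ihy, hB, hC, if_neg (Nat.succ_ne_zero (n+1))]
      simp only [Nat.add_sub_cancel]
      rw [Finset.sum_range_succ (fun i => y i ^ 2) (n+1),
        Finset.sum_range_succ (fun i => (y i + y (i+1)) ^ 2) n]
      ring

open Matrix


open MeasureTheory

/-- The `m × m` symmetric tridiagonal Toeplitz matrix with diagonal entries `v₁ + v₂`,
sub- and super-diagonal entries `c`, and `0` elsewhere. -/
def Khat (m : ℕ) (v₁ v₂ c : ℝ) : Matrix (Fin m) (Fin m) ℝ := fun i j =>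
  if i = j then v₁ + v₂
  else if (i : ℕ) + 1 = (j : ℕ) ∨ (j : ℕ) + 1 = (i : ℕ) then c else 0

/-- if `μ` is a probability measure on `[0,1]` with `μ((0,1)) > 0` then, with
`v₁ = ∫₀¹ μ([s,1])² ds`, `v₂ = ∫₀¹ μ([0,s])² ds` and `c = ∫₀¹ μ([0,s])μ([s,1]) ds`, for every
`m ≥ 1` the tridiagonal Toeplitz matrix `K̂` is positive definite, and in particular
invertible. -/
theorem Khat_posDef
    (μ : Measure ℝ) [IsProbabilityMeasure μ] (hμsupp : μ (Set.Icc (0 : ℝ) 1)ᶜ = 0)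
    (hμ : 0 < μ (Set.Ioo (0 : ℝ) 1))
    (v₁ v₂ c : ℝ)
    (hv₁ : v₁ = ∫ s in Set.Icc (0 : ℝ) 1, ((μ (Set.Icc s 1)).toReal) ^ 2)
    (hv₂ : v₂ = ∫ s in Set.Icc (0 : ℝ) 1, ((μ (Set.Icc 0 s)).toReal) ^ 2)
    (hc : c = ∫ s in Set.Icc (0 : ℝ) 1, (μ (Set.Icc 0 s)).toReal * (μ (Set.Icc s 1)).toReal)
    (m : ℕ) (hm : 1 ≤ m) :
    (Khat m v₁ v₂ c).PosDef ∧ IsUnit (Khat m v₁ v₂ c).det := by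
  -- notation
  set F : ℝ → ℝ := fun s => (μ (Set.Icc 0 s)).toReal with hF
  set G : ℝ → ℝ := fun s => (μ (Set.Icc s 1)).toReal with hG
  -- basic properties of F and G
  have hFmono : Monotone F := fun a b hab =>
    ENNReal.toReal_mono (measure_ne_top μ _) (measure_mono (Set.Icc_subset_Icc_right hab))
  have hGanti : Antitone G := fun a b hab =>
    ENNReal.toReal_mono (measure_ne_top μ _) (measure_mono (Set.Icc_subset_Icc_left hab))
  have hF0 : ∀ s, 0 ≤ F s := fun s => ENNReal.toReal_nonneg
  have hG0 : ∀ s, 0 ≤ G s := fun s => ENNReal.toReal_nonneg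
  have hF1 : ∀ s, F s ≤ 1 := fun s => by
    simpa using ENNReal.toReal_mono ENNReal.one_ne_top (prob_le_one (μ := μ))
  have hG1 : ∀ s, G s ≤ 1 := fun s => by
    simpa using ENNReal.toReal_mono ENNReal.one_ne_top (prob_le_one (μ := μ))
  have hbdd : ∀ (f : ℝ → ℝ) (M : ℝ), Measurable f → (∀ s, |f s| ≤ M) →
      IntegrableOn f (Set.Icc (0:ℝ) 1) volume := fun f M hf hb =>
    Measure.integrableOn_of_bounded (by simp [Real.volume_Icc]) hf.aestronglyMeasurable
      (ae_of_all _ fun s => by simpa using hb s)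
  have hFm : Measurable F := hFmono.measurable
  have hGm : Measurable G := hGanti.measurable
  have habs : ∀ f : ℝ → ℝ, (∀ s, 0 ≤ f s) → (∀ s, f s ≤ 1) → ∀ s, |f s| ≤ 1 :=
    fun f h0 h1 s => abs_le.mpr ⟨by linarith [h0 s], h1 s⟩
  have hintF2 : IntegrableOn (fun s => F s ^ 2) (Set.Icc (0:ℝ) 1) volume :=
    hbdd _ 1 (hFm.pow_const 2) (fun s => by
      rw [abs_of_nonneg (by positivity)]
      nlinarith [hF0 s, hF1 s])
  have hintG2 : IntegrableOn (fun s => G s ^ 2) (Set.Icc (0:ℝ) 1) volume :=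
    hbdd _ 1 (hGm.pow_const 2) (fun s => by
      rw [abs_of_nonneg (by positivity)]
      nlinarith [hG0 s, hG1 s])
  have hintFG : IntegrableOn (fun s => F s * G s) (Set.Icc (0:ℝ) 1) volume :=
    hbdd _ 1 (hFm.mul hGm) (fun s => by
      rw [abs_of_nonneg (mul_nonneg (hF0 s) (hG0 s))]
      nlinarith [hF0 s, hF1 s, hG0 s, hG1 s])
  -- c is nonnegative
  have hc0 : 0 ≤ c := by
    rw [hc]
    exact setIntegral_nonneg measurableSet_Icc fun s _ =>
      mul_nonneg ENNReal.toReal_nonneg ENNReal.toReal_nonneg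
  -- v₁ + v₂ - 2c = ∫ (G - F)²  ≥ 0
  have hsub : ∫ s in Set.Icc (0:ℝ) 1, (G s - F s) ^ 2 = v₁ + v₂ - 2 * c := by
    have hcongr : ∀ s ∈ Set.Icc (0:ℝ) 1,
        (G s - F s) ^ 2 = (fun s => G s ^ 2 + F s ^ 2 - 2 * (F s * G s)) s := by
      intro s _; simp only; ring
    have hintGF2 : IntegrableOn (fun s => G s ^ 2 + F s ^ 2) (Set.Icc (0:ℝ) 1) volume :=
      hintG2.add hintF2
    have hintFG2 : IntegrableOn (fun s => 2 * (F s * G s)) (Set.Icc (0:ℝ) 1) volume :=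
      hintFG.const_mul 2
    rw [setIntegral_congr_fun measurableSet_Icc hcongr,
      integral_sub hintGF2 hintFG2,
      integral_add hintG2 hintF2, integral_const_mul 2, hv₁, hv₂, hc]
  have hdc : 2 * c ≤ v₁ + v₂ := by
    have h : 0 ≤ ∫ s in Set.Icc (0:ℝ) 1, (G s - F s) ^ 2 :=
      setIntegral_nonneg measurableSet_Icc (fun s _ => sq_nonneg (G s - F s))
    rw [hsub] at h; linarith
  -- v₁ + v₂ + 2c = ∫ (G + F)² ≥ 1
  have hsum : ∫ s in Set.Icc (0:ℝ) 1, (G s + F s) ^ 2 = v₁ + v₂ + 2 * c := by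
    have hcongr : ∀ s ∈ Set.Icc (0:ℝ) 1,
        (G s + F s) ^ 2 = (fun s => G s ^ 2 + F s ^ 2 + 2 * (F s * G s)) s := by
      intro s _; simp only; ring
    have hintGF2 : IntegrableOn (fun s => G s ^ 2 + F s ^ 2) (Set.Icc (0:ℝ) 1) volume :=
      hintG2.add hintF2
    have hintFG2 : IntegrableOn (fun s => 2 * (F s * G s)) (Set.Icc (0:ℝ) 1) volume :=
      hintFG.const_mul 2
    rw [setIntegral_congr_fun measurableSet_Icc hcongr,
      integral_add hintGF2 hintFG2,
      integral_add hintG2 hintF2, integral_const_mul 2, hv₁, hv₂, hc]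
  have hIcc1 : μ (Set.Icc (0:ℝ) 1) = 1 := by
    have h := measure_add_measure_compl (μ := μ) (measurableSet_Icc (a := (0:ℝ)) (b := 1))
    rw [hμsupp, add_zero] at h
    simp [h]
  have hFG1 : ∀ s ∈ Set.Icc (0:ℝ) 1, 1 ≤ G s + F s := by
    intro s hs
    obtain ⟨hs0, hs1⟩ := hs
    have hcov : Set.Icc (0:ℝ) 1 ⊆ Set.Icc 0 s ∪ Set.Icc s 1 := by
      intro t ht
      rcases le_total t s with h | h
      · exact Or.inl ⟨ht.1, h⟩
      · exact Or.inr ⟨h, ht.2⟩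
    have hle : (1 : ENNReal) ≤ μ (Set.Icc 0 s) + μ (Set.Icc s 1) := by
      calc (1 : ENNReal) = μ (Set.Icc (0:ℝ) 1) := hIcc1.symm
        _ ≤ μ (Set.Icc 0 s ∪ Set.Icc s 1) := measure_mono hcov
        _ ≤ μ (Set.Icc 0 s) + μ (Set.Icc s 1) := measure_union_le _ _
    have := ENNReal.toReal_mono
      (ENNReal.add_ne_top.mpr ⟨measure_ne_top μ _, measure_ne_top μ _⟩) hle
    rw [ENNReal.toReal_add (measure_ne_top μ _) (measure_ne_top μ _)] at this
    simpa [hF, hG, add_comm] using this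
  have hdc1 : 1 ≤ v₁ + v₂ + 2 * c := by
    rw [← hsum]
    calc (1:ℝ) = ∫ _ in Set.Icc (0:ℝ) 1, (1:ℝ) := by simp [Real.volume_Icc]
      _ ≤ ∫ s in Set.Icc (0:ℝ) 1, (G s + F s) ^ 2 := by
        refine setIntegral_mono_on ((integrableOn_const_iff).mpr (Or.inr (by simp [Real.volume_Icc])))
          (hbdd _ 4 ((hGm.add hFm).pow_const 2) (fun s => by
            rw [abs_of_nonneg (by positivity)]
            nlinarith [hF0 s, hF1 s, hG0 s, hG1 s]))
          measurableSet_Icc (fun s hs => ?_)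
        have := hFG1 s hs
        nlinarith
  -- now the linear algebra
  set d : ℝ := v₁ + v₂ with hd
  have hherm : (Khat m v₁ v₂ c).IsHermitian := by
    ext i j
    simp only [Matrix.conjTranspose_apply, Khat, star_trivial]
    by_cases h : i = j
    · subst h; simp
    · rw [if_neg (fun hh => h hh.symm), if_neg h]
      exact if_congr or_comm rfl rfl
  have hpd : (Khat m v₁ v₂ c).PosDef := by
    refine Matrix.PosDef.of_dotProduct_mulVec_pos hherm fun x hx => ?_
    set y : ℕ → ℝ := fun n => if h : n < m then x ⟨n, h⟩ else 0 with hy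
    have hyx : ∀ i : Fin m, y (↑i) = x i := fun i => by simp [hy, i.isLt]
    have hQ : dotProduct (star x) ((Khat m v₁ v₂ c) *ᵥ x) =
        ∑ i ∈ Finset.range m, ∑ j ∈ Finset.range m,
          (if i = j then d else if i + 1 = j ∨ j + 1 = i then c else 0) * (y i * y j) := by
      have hterm : ∀ i j : Fin m, x i * (Khat m v₁ v₂ c i j * x j)
          = (fun a b : ℕ =>
              (if a = b then d else if a + 1 = b ∨ b + 1 = a then c else 0) * (y a * y b)) ↑i ↑j := by
        intro i j
        rw [← hyx i, ← hyx j]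
        simp only [Khat, Fin.ext_iff]
        split_ifs <;> ring
      calc dotProduct (star x) ((Khat m v₁ v₂ c) *ᵥ x)
          = ∑ i : Fin m, ∑ j : Fin m, x i * (Khat m v₁ v₂ c i j * x j) := by
            simp [dotProduct, Matrix.mulVec, Finset.mul_sum]
        _ = ∑ i : Fin m, ∑ j : Fin m, (fun a b : ℕ =>
              (if a = b then d else if a + 1 = b ∨ b + 1 = a then c else 0) * (y a * y b)) ↑i ↑j :=
            Finset.sum_congr rfl fun i _ => Finset.sum_congr rfl fun j _ => hterm i j
        _ = ∑ i ∈ Finset.range m, ∑ j ∈ Finset.range m,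
              (if i = j then d else if i + 1 = j ∨ j + 1 = i then c else 0) * (y i * y j) := by
            rw [← Fin.sum_univ_eq_sum_range (fun i => ∑ j ∈ Finset.range m,
              (if i = j then d else if i + 1 = j ∨ j + 1 = i then c else 0) * (y i * y j)) m]
            refine Finset.sum_congr rfl fun i _ => ?_
            exact Fin.sum_univ_eq_sum_range (fun j =>
              (if (i:ℕ) = j then d else if (i:ℕ) + 1 = j ∨ j + 1 = (i:ℕ) then c else 0)
                * (y ↑i * y j)) m
    rw [hQ, tri_quad d c m y, if_neg (by omega)]
    -- positivity
    obtain ⟨i₀, hxi₀⟩ := Function.ne_iff.mp hx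
    have hAmem : (i₀ : ℕ) ∈ Finset.range m := Finset.mem_range.mpr i₀.isLt
    have hA : 0 < ∑ i ∈ Finset.range m, y i ^ 2 := by
      have h1 : y ↑i₀ ^ 2 ≤ ∑ i ∈ Finset.range m, y i ^ 2 :=
        Finset.single_le_sum (fun i _ => sq_nonneg (y i)) hAmem
      have h2 : 0 < y ↑i₀ ^ 2 := by
        rw [hyx i₀]
        exact lt_of_le_of_ne (sq_nonneg _) (Ne.symm (pow_ne_zero 2 hxi₀))
      linarith
    have hSnn : 0 ≤ ∑ i ∈ Finset.range (m-1), (y i + y (i+1)) ^ 2 :=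
      Finset.sum_nonneg fun i _ => sq_nonneg _
    have hbdnn : 0 ≤ y 0 ^ 2 + y (m-1) ^ 2 := by positivity
    rcases eq_or_lt_of_le hc0 with hceq | hcpos
    · have hd1 : 1 ≤ d := by rw [hd]; linarith
      rw [← hceq]
      have : 0 < (d - 2 * 0) * ∑ i ∈ Finset.range m, y i ^ 2 := by
        apply mul_pos _ hA; linarith
      linarith
    · -- c > 0 : show the boundary + SOS part is positive
      have hBpos : 0 < (y 0 ^ 2 + y (m-1) ^ 2)
          + ∑ i ∈ Finset.range (m-1), (y i + y (i+1)) ^ 2 := by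
        rcases lt_or_ge 0 ((y 0 ^ 2 + y (m-1) ^ 2)
          + ∑ i ∈ Finset.range (m-1), (y i + y (i+1)) ^ 2) with h | h
        · exact h
        exfalso
        have hbd0 : y 0 ^ 2 + y (m-1) ^ 2 = 0 := le_antisymm (by linarith) hbdnn
        have hS0 : ∑ i ∈ Finset.range (m-1), (y i + y (i+1)) ^ 2 = 0 := by linarith
        have hy0 : y 0 = 0 := by
          have : y 0 ^ 2 = 0 := le_antisymm (by nlinarith [sq_nonneg (y (m-1))]) (sq_nonneg _)
          exact pow_eq_zero_iff (n := 2) (by norm_num) |>.mp this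
        have hterms := (Finset.sum_eq_zero_iff_of_nonneg
          (fun i _ => sq_nonneg (y i + y (i+1)))).mp hS0
        have hzero : ∀ i, i < m → y i = 0 := by
          intro i
          induction i with
          | zero => intro _; exact hy0
          | succ k ihk =>
            intro hk
            have hk1 : k < m := by omega
            have hkm : k ∈ Finset.range (m-1) := Finset.mem_range.mpr (by omega)
            have h2 := hterms k hkm
            have h3 : y k + y (k+1) = 0 :=
              pow_eq_zero_iff (n := 2) (by norm_num) |>.mp h2
            have := ihk hk1
            linarith
        exact hxi₀ (by rw [← hyx i₀]; exact hzero _ i₀.isLt)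
      have h1 : 0 ≤ (d - 2 * c) * ∑ i ∈ Finset.range m, y i ^ 2 :=
        mul_nonneg (by rw [hd]; linarith) hA.le
      have h2 : 0 < c * ((y 0 ^ 2 + y (m-1) ^ 2)
          + ∑ i ∈ Finset.range (m-1), (y i + y (i+1)) ^ 2) := mul_pos hcpos hBpos
      linarith
  exact ⟨hpd, isUnit_iff_ne_zero.mpr hpd.det_pos.ne'⟩
end

section
/- Define ξ = 2(W_{1/2} − (1/2)W_1) and, for t ∈ [0,1], W**_t = (W_t − t·W_1) − ξ·min(t, 1−t). Then for all s, t ∈ [0,1], E[W**_s W**_t] = min(s,t) − s·t − min(s,1−s)·min(t,1−t). In particular, E[W**_s W**_t] = 0 whenever s ≤ 1/2 ≤ t, and E[W**_s W**_t] = min(s,t) − 2·s·t whenever s, t ∈ [0,1/2]. -/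
open MeasureTheory ProbabilityTheory


open MeasureTheory ProbabilityTheory Real
open scoped NNReal ENNReal

lemma aux_integrable_sq_exp {b : ℝ} (hb : 0 < b) :
    Integrable (fun x : ℝ => x ^ 2 * Real.exp (-b * x ^ 2)) := by
  have h := integrable_rpow_mul_exp_neg_mul_sq hb (s := 2) (by norm_num)
  have h2 : ((2 : ℝ)) = ((2 : ℕ) : ℝ) := by norm_num
  simp_rw [h2, Real.rpow_natCast] at h
  exact h

lemma aux_integral_sq_exp {b : ℝ} (hb : 0 < b) :
    ∫ x : ℝ, x ^ 2 * Real.exp (-b * x ^ 2) = b ^ (-(3:ℝ)/2) * (Real.sqrt π / 2) := by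
  have hint := aux_integrable_sq_exp hb
  have hIoi : ∫ x in Set.Ioi (0:ℝ), x ^ 2 * Real.exp (-b * x ^ 2)
      = b ^ (-(3:ℝ)/2) * (Real.sqrt π / 4) := by
    have h := integral_rpow_mul_exp_neg_mul_rpow (p := 2) (q := 2) (by norm_num) (by norm_num) hb
    have h2 : ((2 : ℝ)) = ((2 : ℕ) : ℝ) := by norm_num
    rw [h2] at h
    simp_rw [Real.rpow_natCast] at h
    rw [h]
    have hG : Real.Gamma ((((2:ℕ):ℝ) + 1) / ((2:ℕ):ℝ)) = Real.sqrt π / 2 := by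
      have h3 : (((2:ℕ):ℝ) + 1) / ((2:ℕ):ℝ) = 1/2 + 1 := by norm_num
      rw [h3, Real.Gamma_add_one (by norm_num), Real.Gamma_one_half_eq]
      ring
    rw [hG]
    have h4 : (-(((2:ℕ):ℝ) + 1) / ((2:ℕ):ℝ)) = (-(3:ℝ)/2) := by norm_num
    rw [h4]
    push_cast
    ring
  have hIic : ∫ x in Set.Iic (0:ℝ), x ^ 2 * Real.exp (-b * x ^ 2)
      = ∫ x in Set.Ioi (0:ℝ), x ^ 2 * Real.exp (-b * x ^ 2) := by
    have h := integral_comp_neg_Ioi (0:ℝ) (fun x => x ^ 2 * Real.exp (-b * x ^ 2))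
    simp only [neg_zero, neg_sq] at h
    exact h.symm
  have htot := intervalIntegral.integral_Iic_add_Ioi (b := (0:ℝ)) hint.integrableOn hint.integrableOn
  rw [← htot, hIic, hIoi]
  ring

lemma aux_gaussianPDF_eq (v : ℝ≥0) :
    (fun x : ℝ => gaussianPDFReal 0 v x * x ^ 2)
      = fun x => (Real.sqrt (2 * π * v))⁻¹ * (x ^ 2 * Real.exp (-(2 * (v:ℝ))⁻¹ * x ^ 2)) := by
  funext x
  rw [gaussianPDFReal]
  rw [show -(x - 0) ^ 2 / (2 * (v:ℝ)) = -(2 * (v:ℝ))⁻¹ * x ^ 2 by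
    rw [sub_zero, neg_div, neg_mul, div_eq_inv_mul]]
  ring

lemma integrable_sq_gaussianReal (v : ℝ≥0) :
    Integrable (fun x : ℝ => x ^ 2) (gaussianReal 0 v) := by
  by_cases hv : v = 0
  · rw [hv, gaussianReal_zero_var]
    refine ⟨(measurable_id.pow_const 2).aestronglyMeasurable, ?_⟩
    unfold HasFiniteIntegral
    rw [lintegral_dirac' _ (by fun_prop)]
    exact ENNReal.coe_lt_top
  · rw [gaussianReal_of_var_ne_zero _ hv]
    have hd : gaussianPDF 0 v = fun x => ((Real.toNNReal (gaussianPDFReal 0 v x) : ℝ≥0) : ℝ≥0∞) :=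
      rfl
    rw [hd, integrable_withDensity_iff_integrable_smul
      (measurable_gaussianPDFReal 0 v).real_toNNReal]
    have h1 : (fun x : ℝ => (Real.toNNReal (gaussianPDFReal 0 v x) : ℝ≥0) • x ^ 2)
        = fun x => gaussianPDFReal 0 v x * x ^ 2 := by
      funext x
      rw [NNReal.smul_def, smul_eq_mul, Real.coe_toNNReal _ (gaussianPDFReal_nonneg 0 v x)]
    rw [h1, aux_gaussianPDF_eq v]
    have hc : (0:ℝ) < (v:ℝ) := by
      exact_mod_cast lt_of_le_of_ne (zero_le : (0:ℝ≥0) ≤ v) (Ne.symm hv)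
    exact (aux_integrable_sq_exp (by positivity)).const_mul _

lemma integral_sq_gaussianReal (v : ℝ≥0) :
    ∫ x : ℝ, x ^ 2 ∂(gaussianReal 0 v) = v := by
  by_cases hv : v = 0
  · rw [hv, gaussianReal_zero_var, integral_dirac]
    norm_num
  · rw [gaussianReal_of_var_ne_zero _ hv]
    have hd : gaussianPDF 0 v = fun x => ((Real.toNNReal (gaussianPDFReal 0 v x) : ℝ≥0) : ℝ≥0∞) :=
      rfl
    rw [hd, integral_withDensity_eq_integral_smul
      (measurable_gaussianPDFReal 0 v).real_toNNReal]
    have h1 : (fun x : ℝ => (Real.toNNReal (gaussianPDFReal 0 v x) : ℝ≥0) • x ^ 2)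
        = fun x => gaussianPDFReal 0 v x * x ^ 2 := by
      funext x
      rw [NNReal.smul_def, smul_eq_mul, Real.coe_toNNReal _ (gaussianPDFReal_nonneg 0 v x)]
    rw [h1, aux_gaussianPDF_eq v]
    have hc : (0:ℝ) < (v:ℝ) := by
      exact_mod_cast lt_of_le_of_ne (zero_le : (0:ℝ≥0) ≤ v) (Ne.symm hv)
    have hb : (0:ℝ) < (2 * (v:ℝ))⁻¹ := by positivity
    rw [integral_const_mul, aux_integral_sq_exp hb]
    have e1 : ((2*(v:ℝ))⁻¹) ^ (-(3:ℝ)/2) = 2*(v:ℝ)*Real.sqrt (2*(v:ℝ)) := by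
      rw [show (-(3:ℝ)/2) = -((3:ℝ)/2) by ring, Real.rpow_neg (by positivity),
        Real.inv_rpow (by positivity), inv_inv,
        show ((3:ℝ)/2) = 1 + (1/2 : ℝ) by norm_num, Real.rpow_add (by positivity),
        Real.rpow_one, ← Real.sqrt_eq_rpow]
    have e2 : Real.sqrt (2*π*(v:ℝ)) = Real.sqrt (2*(v:ℝ)) * Real.sqrt π := by
      rw [show 2*π*(v:ℝ) = (2*(v:ℝ))*π by ring, Real.sqrt_mul (by positivity)]
    rw [e1, e2]
    have hs : Real.sqrt (2*(v:ℝ)) ≠ 0 := by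
      rw [Real.sqrt_ne_zero']; linarith
    have hp : Real.sqrt π ≠ 0 := by
      rw [Real.sqrt_ne_zero']; exact pi_pos
    field_simp

lemma aux_sq_moment {Ω : Type*} [MeasurableSpace Ω] (P : Measure Ω) {f : Ω → ℝ}
    (hf : Measurable f) {v : ℝ≥0} (hmap : Measure.map f P = gaussianReal 0 v) :
    Integrable (fun ω => f ω ^ 2) P ∧ ∫ ω, f ω ^ 2 ∂P = v := by
  have h1 : Integrable (fun x : ℝ => x ^ 2) (Measure.map f P) := by
    rw [hmap]; exact integrable_sq_gaussianReal v
  rw [integrable_map_measure (by fun_prop : Measurable fun x : ℝ => x ^ 2).aestronglyMeasurable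
    hf.aemeasurable] at h1
  refine ⟨by simpa [Function.comp_def] using h1, ?_⟩
  rw [← integral_map hf.aemeasurable (by fun_prop : Measurable fun x : ℝ => x ^ 2).aestronglyMeasurable, hmap,
    integral_sq_gaussianReal]


/-- `W` is a standard one-dimensional Brownian motion under `P`: it has continuous paths,
starts at `0`, each `W t` is measurable, and its finite-dimensional distributions are
centered Gaussian with covariance `E[W_s W_t] = min s t`. -/
def IsBrownianMotion {Ω : Type*} [MeasurableSpace Ω] (P : Measure Ω) (W : ℝ → Ω → ℝ) : Prop :=
  (∀ ω, Continuous fun t => W t ω) ∧ (∀ ω, W 0 ω = 0) ∧ (∀ t, Measurable (W t)) ∧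
  ∀ (n : ℕ) (t : Fin n → ℝ), (∀ i, 0 ≤ t i) → ∀ c : Fin n → ℝ,
    Measure.map (fun ω => ∑ i, c i * W (t i) ω) P =
      gaussianReal 0 (Real.toNNReal (∑ i, ∑ j, c i * c j * min (t i) (t j)))

/-- with `ξ = 2(W_{1/2} − W_1/2)` and
`W**_t = (W_t − t W_1) − ξ min(t, 1−t)`, for all `s, t ∈ [0,1]`,
`E[W**_s W**_t] = min(s,t) − s t − min(s,1−s) min(t,1−t)`. In particular
`E[W**_s W**_t] = 0` whenever `s ≤ 1/2 ≤ t`, and `E[W**_s W**_t] = min(s,t) − 2 s t`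
whenever `s, t ∈ [0,1/2]`. -/
theorem brownian_bridge_remainder_covariance
    {Ω : Type*} [MeasurableSpace Ω] (P : Measure Ω) [IsProbabilityMeasure P]
    (W : ℝ → Ω → ℝ) (hW : IsBrownianMotion P W)
    (ξ : Ω → ℝ) (hξ : ∀ ω, ξ ω = 2 * (W (1 / 2) ω - (1 / 2) * W 1 ω))
    (Wss : ℝ → Ω → ℝ)
    (hWss : ∀ t ∈ Set.Icc (0 : ℝ) 1, ∀ ω,
      Wss t ω = (W t ω - t * W 1 ω) - ξ ω * min t (1 - t)) :
    (∀ s ∈ Set.Icc (0 : ℝ) 1, ∀ t ∈ Set.Icc (0 : ℝ) 1,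
      ∫ ω, Wss s ω * Wss t ω ∂P = min s t - s * t - min s (1 - s) * min t (1 - t)) ∧
    (∀ s ∈ Set.Icc (0 : ℝ) 1, ∀ t ∈ Set.Icc (0 : ℝ) 1, s ≤ 1 / 2 → 1 / 2 ≤ t →
      ∫ ω, Wss s ω * Wss t ω ∂P = 0) ∧
    (∀ s ∈ Set.Icc (0 : ℝ) (1 / 2), ∀ t ∈ Set.Icc (0 : ℝ) (1 / 2),
      ∫ ω, Wss s ω * Wss t ω ∂P = min s t - 2 * s * t) := by
  obtain ⟨-, -, hmeas, hfdd⟩ := hW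
  have map1 : ∀ a : ℝ, 0 ≤ a → Measure.map (W a) P = gaussianReal 0 (Real.toNNReal a) := by
    intro a ha
    have h := hfdd 1 ![a] (fun i => by fin_cases i <;> simpa using ha) ![1]
    simpa [Fin.sum_univ_one] using h
  have map2 : ∀ a b : ℝ, 0 ≤ a → 0 ≤ b →
      Measure.map (fun ω => W a ω + W b ω) P
        = gaussianReal 0 (Real.toNNReal (a + b + 2 * min a b)) := by
    intro a b ha hb
    have h := hfdd 2 ![a, b] (fun i => by
      fin_cases i
      · simpa using ha
      · simpa using hb) ![1, 1]
    have hsum : ∑ i : Fin 2, ∑ j : Fin 2,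
        (![(1:ℝ), 1]) i * (![(1:ℝ), 1]) j * min ((![a, b]) i) ((![a, b]) j)
        = a + b + 2 * min a b := by
      simp only [Fin.sum_univ_two, Matrix.cons_val_zero, Matrix.cons_val_one, Matrix.head_cons,
        one_mul, min_self]
      rw [min_comm b a]
      ring
    rw [hsum] at h
    simpa [Fin.sum_univ_two] using h
  have cov : ∀ a b : ℝ, 0 ≤ a → 0 ≤ b →
      Integrable (fun ω => W a ω * W b ω) P ∧ ∫ ω, W a ω * W b ω ∂P = min a b := by
    intro a b ha hb
    obtain ⟨Ia, va⟩ := aux_sq_moment P (hmeas a) (map1 a ha)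
    obtain ⟨Ib, vb⟩ := aux_sq_moment P (hmeas b) (map1 b hb)
    obtain ⟨Iab, vab⟩ := aux_sq_moment P ((hmeas a).add (hmeas b)) (map2 a b ha hb)
    rw [Real.coe_toNNReal _ ha] at va
    rw [Real.coe_toNNReal _ hb] at vb
    rw [Real.coe_toNNReal _ (by have := le_min ha hb; linarith : (0:ℝ) ≤ a + b + 2 * min a b)]
      at vab
    have hrepr : (fun ω => W a ω * W b ω)
        = fun ω => ((W a ω + W b ω) ^ 2 - W a ω ^ 2 - W b ω ^ 2) / 2 := by
      funext ω; ring
    have I1 : Integrable (fun ω => (W a ω + W b ω) ^ 2 - W a ω ^ 2) P := Iab.sub Ia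
    have I2 : Integrable (fun ω => (W a ω + W b ω) ^ 2 - W a ω ^ 2 - W b ω ^ 2) P := I1.sub Ib
    refine ⟨by rw [hrepr]; exact I2.div_const 2, ?_⟩
    simp only [Pi.add_apply] at Iab vab
    rw [hrepr, integral_div, integral_sub I1 Ib, integral_sub Iab Ia, va, vb, vab]
    ring
  have hI : ∀ a b : ℝ, 0 ≤ a → 0 ≤ b → Integrable (fun ω => W a ω * W b ω) P :=
    fun a b ha hb => (cov a b ha hb).1
  have hE : ∀ a b : ℝ, 0 ≤ a → 0 ≤ b → ∫ ω, W a ω * W b ω ∂P = min a b :=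
    fun a b ha hb => (cov a b ha hb).2
  have hrep : ∀ u, u ∈ Set.Icc (0:ℝ) 1 → ∀ ω,
      Wss u ω = W u ω + (min u (1-u) - u) * W 1 ω + (-(2 * min u (1-u))) * W (1/2) ω := by
    intro u hu ω
    rw [hWss u hu ω, hξ ω]; ring
  have key : ∀ s ∈ Set.Icc (0:ℝ) 1, ∀ t ∈ Set.Icc (0:ℝ) 1,
      ∫ ω, Wss s ω * Wss t ω ∂P = min s t - s * t - min s (1-s) * min t (1-t) := by
    intro s hs t ht
    obtain ⟨hs0, hs1⟩ := hs; obtain ⟨ht0, ht1⟩ := ht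
    have level1 : ∀ u : ℝ, 0 ≤ u →
        Integrable (fun ω => W u ω * Wss t ω) P ∧
          ∫ ω, W u ω * Wss t ω ∂P = min u t + (min t (1-t) - t) * min u 1
            + (-(2 * min t (1-t))) * min u (1/2) := by
      intro u hu
      have heq : (fun ω => W u ω * Wss t ω)
          = fun ω => W u ω * W t ω + (min t (1-t) - t) * (W u ω * W 1 ω)
              + (-(2 * min t (1-t))) * (W u ω * W (1/2) ω) := by
        funext ω; rw [hrep t ⟨ht0, ht1⟩ ω]; ring
      have A1 : Integrable (fun ω => (min t (1-t) - t) * (W u ω * W 1 ω)) P :=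
        (hI u 1 hu zero_le_one).const_mul _
      have A2 : Integrable (fun ω => (-(2 * min t (1-t))) * (W u ω * W (1/2) ω)) P :=
        (hI u (1/2) hu (by norm_num)).const_mul _
      have A3 : Integrable
          (fun ω => W u ω * W t ω + (min t (1-t) - t) * (W u ω * W 1 ω)) P :=
        (hI u t hu ht0).add A1
      constructor
      · rw [heq]; exact A3.add A2
      · rw [heq, integral_add A3 A2, integral_add (hI u t hu ht0) A1,
          integral_const_mul, integral_const_mul, hE u t hu ht0, hE u 1 hu zero_le_one,
          hE u (1/2) hu (by norm_num)]
    have heq2 : (fun ω => Wss s ω * Wss t ω)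
        = fun ω => W s ω * Wss t ω + (min s (1-s) - s) * (W 1 ω * Wss t ω)
            + (-(2 * min s (1-s))) * (W (1/2) ω * Wss t ω) := by
      funext ω; rw [hrep s ⟨hs0, hs1⟩ ω]; ring
    have B1 : Integrable (fun ω => (min s (1-s) - s) * (W 1 ω * Wss t ω)) P :=
      (level1 1 zero_le_one).1.const_mul _
    have B2 : Integrable (fun ω => (-(2 * min s (1-s))) * (W (1/2) ω * Wss t ω)) P :=
      (level1 (1/2) (by norm_num)).1.const_mul _
    have B3 : Integrable
        (fun ω => W s ω * Wss t ω + (min s (1-s) - s) * (W 1 ω * Wss t ω)) P :=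
      (level1 s hs0).1.add B1
    rw [heq2, integral_add B3 B2, integral_add (level1 s hs0).1 B1,
      integral_const_mul, integral_const_mul,
      (level1 s hs0).2, (level1 1 zero_le_one).2, (level1 (1/2) (by norm_num)).2]
    have hhalf : ∀ u : ℝ, u ≤ 1 → min u (1/2) = (u + min u (1-u)) / 2 := by
      intro u hu
      rcases le_total u (1/2) with h | h
      · rw [min_eq_left h, min_eq_left (by linarith)]; ring
      · rw [min_eq_right h, min_eq_right (by linarith)]; ring
    rw [min_eq_left hs1, min_eq_right ht1, min_self,
      min_eq_right (by norm_num : (1:ℝ)/2 ≤ 1), min_eq_left (by norm_num : (1:ℝ)/2 ≤ 1),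
      min_self, hhalf s hs1, min_comm (1/2) t, hhalf t ht1]
    ring
  refine ⟨key, ?_, ?_⟩
  · intro s hs t ht hs2 ht2
    rw [key s hs t ht, min_eq_left (le_trans hs2 ht2),
      min_eq_left (by linarith : s ≤ 1 - s), min_eq_right (by linarith : 1 - t ≤ t)]
    ring
  · intro s hs t ht
    obtain ⟨hs0, hs2⟩ := hs; obtain ⟨ht0, ht2⟩ := ht
    rw [key s ⟨hs0, by linarith⟩ t ⟨ht0, by linarith⟩,
      min_eq_left (by linarith : s ≤ 1 - s), min_eq_left (by linarith : t ≤ 1 - t)]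
    ring
end
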